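/- arXiv:1703.01612 — 7 statements merged into one kernel-verified Lean document; each statement's English description precedes it below -/
import Mathlib

section
/- Let X be a real-valued random variable, and let a, b be real numbers with a < b such that X almost surely takes no values in the open interval (a,b). If the mean μ = E[X] satisfies a < μ < b, then the variance of X satisfies Var(X) ≥ (μ - a)(b - μ). -/
open MeasureTheory

theorem stmt_0 {Ω : Type*} [MeasurableSpace Ω] (P : Measure Ω) [IsProbabilityMeasure P]
    (X : Ω → ℝ) (hX : MemLp X 2 P)
    (a b : ℝ) (hab : a < b)
    (h0 : P {ω | X ω ∈ Set.Ioo a b} = 0)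
    (hμa : a < ∫ ω, X ω ∂P) (hμb : (∫ ω, X ω ∂P) < b) :
    (∫ ω, (X ω) ^ 2 ∂P) - (∫ ω, X ω ∂P) ^ 2
      ≥ ((∫ ω, X ω ∂P) - a) * (b - ∫ ω, X ω ∂P) := by
  have hX2 : Integrable (fun ω => (X ω) ^ 2) P := by
    simpa [sq] using hX.integrable_sq
  have hX1 : Integrable X P := hX.integrable one_le_two
  have hae : ∀ᵐ ω ∂P, 0 ≤ (X ω - a) * (X ω - b) := by
    rw [ae_iff]
    refine measure_mono_null ?_ h0
    intro ω hω
    simp only [Set.mem_setOf_eq, not_le] at hω ⊢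
    have hneg : (X ω - a) * (X ω - b) < 0 := by linarith
    rcases mul_neg_iff.mp hneg with ⟨h1, h2⟩ | ⟨h1, h2⟩
    · exact ⟨by linarith, by linarith⟩
    · exact absurd (by linarith : a < b) (by linarith)
  have hnn : 0 ≤ ∫ ω, (X ω - a) * (X ω - b) ∂P := integral_nonneg_of_ae hae
  have hexp : ∫ ω, (X ω - a) * (X ω - b) ∂P
      = (∫ ω, (X ω) ^ 2 ∂P) - (a + b) * (∫ ω, X ω ∂P) + a * b := by
    have : ∀ ω, (X ω - a) * (X ω - b) = (X ω) ^ 2 - (a + b) * X ω + a * b := by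
      intro ω; ring
    simp_rw [this]
    have hint : Integrable (fun ω => X ω ^ 2 - (a + b) * X ω) P :=
      hX2.sub (hX1.const_mul _)
    rw [integral_add hint (integrable_const _),
      integral_sub hX2 (hX1.const_mul _), integral_const_mul, integral_const]
    simp
  nlinarith [hnn, hexp]
end

section
/- Let H be a finite-dimensional complex inner product space, A a self-adjoint operator on H whose spectrum is contained in ℤ, and ψ a unit vector with expectation value μ = ⟨ψ, Aψ⟩ satisfying 0 < μ < 1. Then the variance ⟨ψ, A²ψ⟩ - μ² is at least μ(1 - μ). -/
open scoped InnerProductSpace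

theorem stmt_2 {H : Type*} [NormedAddCommGroup H] [InnerProductSpace ℂ H]
    [FiniteDimensional ℂ H]
    (A : H →ₗ[ℂ] H) (hA : ∀ x y : H, ⟪A x, y⟫_ℂ = ⟪x, A y⟫_ℂ)
    (hspec : ∀ c ∈ spectrum ℂ A, ∃ n : ℤ, c = (n : ℂ))
    (ψ : H) (hψ : ‖ψ‖ = 1)
    (μ : ℝ) (hμ : (μ : ℂ) = ⟪ψ, A ψ⟫_ℂ) (hμ0 : 0 < μ) (hμ1 : μ < 1)
    (v : ℝ) (hv : (v : ℂ) = ⟪ψ, A (A ψ)⟫_ℂ) :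
    v - μ ^ 2 ≥ μ * (1 - μ) := by
  have hT : A.IsSymmetric := hA
  set N := Module.finrank ℂ H with hN
  have hn : Module.finrank ℂ H = N := rfl
  set b := hT.eigenvectorBasis hn with hb
  set lam := hT.eigenvalues hn with hlam
  set c : Fin N → ℂ := fun i => b.repr ψ i with hc
  -- eigenvalues are integers
  have hint : ∀ i, ∃ n : ℤ, (lam i : ℝ) = (n : ℝ) := by
    intro i
    have hev := hT.hasEigenvalue_eigenvalues hn i
    have hmem : (lam i : ℂ) ∈ spectrum ℂ A := hev.mem_spectrum
    obtain ⟨n, hn'⟩ := hspec _ hmem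
    exact ⟨n, by exact_mod_cast hn'⟩
  have repr_A : ∀ (x : H) (i : Fin N), b.repr (A x) i = (lam i : ℂ) * b.repr x i :=
    fun x i => hT.eigenvectorBasis_apply_self_apply hn x i
  have key : ∀ x : H, ⟪ψ, x⟫_ℂ = ∑ i, (starRingEnd ℂ) (c i) * b.repr x i := by
    intro x
    rw [← b.sum_inner_mul_inner ψ x]
    congr 1; ext i
    have h1 : (starRingEnd ℂ) (c i) = ⟪ψ, b i⟫_ℂ := by
      rw [show c i = b.repr ψ i from rfl, b.repr_apply_apply, inner_conj_symm]
    rw [h1, b.repr_apply_apply]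
  have hmu : (μ : ℂ) = ∑ i, (lam i : ℂ) * (‖c i‖ ^ 2 : ℝ) := by
    rw [hμ, key]
    congr 1; ext i
    rw [repr_A, show b.repr ψ i = c i from rfl,
      show (starRingEnd ℂ) (c i) * ((lam i : ℂ) * c i)
        = (lam i : ℂ) * ((starRingEnd ℂ) (c i) * c i) by ring, RCLike.conj_mul]
    push_cast
    rfl
  have hvv : (v : ℂ) = ∑ i, (lam i : ℂ) ^ 2 * (‖c i‖ ^ 2 : ℝ) := by
    rw [hv, key]
    congr 1; ext i
    rw [repr_A, repr_A, show b.repr ψ i = c i from rfl,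
      show (starRingEnd ℂ) (c i) * ((lam i : ℂ) * ((lam i : ℂ) * c i))
        = (lam i : ℂ) ^ 2 * ((starRingEnd ℂ) (c i) * c i) by ring, RCLike.conj_mul]
    push_cast
    rfl
  -- real versions
  have hmuR : μ = ∑ i, lam i * ‖c i‖ ^ 2 := by
    have := hmu
    push_cast at this
    exact_mod_cast this
  have hvR : v = ∑ i, lam i ^ 2 * ‖c i‖ ^ 2 := by
    have := hvv
    push_cast at this
    exact_mod_cast this
  have hge : v ≥ μ := by
    rw [hmuR, hvR]
    apply Finset.sum_le_sum
    intro i _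
    obtain ⟨n, hn'⟩ := hint i
    have h1 : (n : ℝ) ≤ (n : ℝ) ^ 2 := by
      have := Int.le_self_sq n
      exact_mod_cast this
    have h2 : (0 : ℝ) ≤ ‖c i‖ ^ 2 := by positivity
    rw [hn']
    nlinarith
  nlinarith
end

section
/- Let D : [0,∞) → ℝ be a differentiable nonnegative nonincreasing function and let Ψ : [0,∞) → H be a continuously differentiable curve in a Hilbert space H such that ‖Ψ'(t)‖² = -½ D'(t) and -D'(t) ≥ D(t) for all t. Then for all 0 ≤ t₁ ≤ t₂, ‖Ψ(t₂) - Ψ(t₁)‖ ≤ √(2 D(t₁)) - √(2 D(t₂)). -/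
theorem stmt_5 {H : Type*} [NormedAddCommGroup H] [InnerProductSpace ℂ H]
    (D : ℝ → ℝ) (hD : Differentiable ℝ D)
    (hDnonneg : ∀ t, 0 ≤ t → 0 ≤ D t)
    (hDmono : ∀ t, 0 ≤ t → deriv D t ≤ 0)
    (Ψ : ℝ → H) (Ψ' : ℝ → H)
    (hΨ : ∀ t, HasDerivAt Ψ (Ψ' t) t) (hΨ'cont : Continuous Ψ')
    (hnorm : ∀ t, 0 ≤ t → ‖Ψ' t‖ ^ 2 = -(1 / 2) * deriv D t)
    (hgrow : ∀ t, 0 ≤ t → D t ≤ -deriv D t) :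
    ∀ t₁ t₂, 0 ≤ t₁ → t₁ ≤ t₂ →
      ‖Ψ t₂ - Ψ t₁‖ ≤ Real.sqrt (2 * D t₁) - Real.sqrt (2 * D t₂) := by
  intro t₁ t₂ ht₁ h12
  -- work in the completion of H
  set L : H →L[ℂ] UniformSpace.Completion H := UniformSpace.Completion.toComplL
  have hLnorm : ∀ x : H, ‖L x‖ = ‖x‖ := fun x => UniformSpace.Completion.norm_coe x
  set Φ : ℝ → UniformSpace.Completion H := fun t => L (Ψ t) with hΦdef
  set Φ' : ℝ → UniformSpace.Completion H := fun t => L (Ψ' t) with hΦ'def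
  have hΦ : ∀ t, HasDerivAt Φ (Φ' t) t := fun t =>
    ((L.restrictScalars ℝ).hasFDerivAt.comp_hasDerivAt t (hΨ t))
  have hΦ'cont : Continuous Φ' := L.continuous.comp hΨ'cont
  have hΦ'norm : ∀ t, ‖Φ' t‖ = ‖Ψ' t‖ := fun t => hLnorm _
  have key : ∀ ε : ℝ, 0 < ε →
      ‖Ψ t₂ - Ψ t₁‖ ≤ Real.sqrt (2 * D t₁ + ε) - Real.sqrt (2 * D t₂ + ε)
        + (t₂ - t₁) * (Real.sqrt ε / 4) := by
    intro ε hε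
    have huIcc : Set.uIcc t₁ t₂ = Set.Icc t₁ t₂ := Set.uIcc_of_le h12
    have hmem : ∀ s ∈ Set.uIcc t₁ t₂, 0 ≤ s := by
      rw [huIcc]; exact fun s hs => le_trans ht₁ hs.1
    have hpos : ∀ s, 0 ≤ s → 0 < 2 * D s + ε := fun s hs => by nlinarith [hDnonneg s hs]
    have hg : ∀ s, 0 ≤ s → HasDerivAt (fun t => Real.sqrt (2 * D t + ε))
        (deriv D s / Real.sqrt (2 * D s + ε)) s := by
      intro s hs
      have h1 : HasDerivAt (fun t => 2 * D t + ε) (2 * deriv D s) s := by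
        simpa using (((hD s).hasDerivAt.const_mul 2).add_const ε)
      have h2 := h1.sqrt (ne_of_gt (hpos s hs))
      convert h2 using 1
      exact (mul_div_mul_left _ _ two_ne_zero).symm
    have hDeriv : ∀ s, 0 ≤ s → deriv D s = -2 * ‖Ψ' s‖^2 := by
      intro s hs; have := hnorm s hs; linarith
    have hDcontOn : ContinuousOn (deriv D) (Set.uIcc t₁ t₂) := by
      have : ContinuousOn (fun s => -2 * ‖Ψ' s‖^2) (Set.uIcc t₁ t₂) :=
        (continuous_const.mul ((hΨ'cont.norm.pow 2))).continuousOn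
      exact this.congr (fun s hs => hDeriv s (hmem s hs))
    have hIntegrand : ContinuousOn (fun s => deriv D s / Real.sqrt (2 * D s + ε))
        (Set.uIcc t₁ t₂) := by
      apply hDcontOn.div
      · exact (Real.continuous_sqrt.comp
          ((continuous_const.mul hD.continuous).add continuous_const)).continuousOn
      · intro s hs; exact ne_of_gt (Real.sqrt_pos.mpr (hpos s (hmem s hs)))
    have hFTC : ∫ s in t₁..t₂, deriv D s / Real.sqrt (2 * D s + ε)
        = Real.sqrt (2 * D t₂ + ε) - Real.sqrt (2 * D t₁ + ε) :=
      intervalIntegral.integral_eq_sub_of_hasDerivAt (fun s hs => hg s (hmem s hs))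
        (hIntegrand.intervalIntegrable)
    have hΦeq : ∫ s in t₁..t₂, Φ' s = Φ t₂ - Φ t₁ :=
      intervalIntegral.integral_eq_sub_of_hasDerivAt (fun s _ => hΦ s)
        (hΦ'cont.intervalIntegrable _ _)
    have h1 : ‖Ψ t₂ - Ψ t₁‖ ≤ ∫ s in t₁..t₂, ‖Ψ' s‖ := by
      have : ‖Ψ t₂ - Ψ t₁‖ = ‖Φ t₂ - Φ t₁‖ := by
        rw [hΦdef]; simp only [← map_sub]; rw [hLnorm]
      rw [this, ← hΦeq]
      calc ‖∫ s in t₁..t₂, Φ' s‖ ≤ ∫ s in t₁..t₂, ‖Φ' s‖ :=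
            intervalIntegral.norm_integral_le_integral_norm h12
        _ = ∫ s in t₁..t₂, ‖Ψ' s‖ := by simp_rw [hΦ'norm]
    have hpt : ∀ s ∈ Set.uIcc t₁ t₂, ‖Ψ' s‖ ≤
        -(deriv D s / Real.sqrt (2 * D s + ε)) + Real.sqrt ε / 4 := by
      intro s hs
      have hs0 : 0 ≤ s := hmem s hs
      set a := -deriv D s with ha
      have ha0 : 0 ≤ a := by have := hDmono s hs0; linarith
      have hDa : D s ≤ a := hgrow s hs0
      have hD0 : 0 ≤ D s := hDnonneg s hs0
      have hnrm : ‖Ψ' s‖ = Real.sqrt (a / 2) := by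
        have h := hnorm s hs0
        rw [← Real.sqrt_sq (norm_nonneg (Ψ' s)), h]
        congr 1; ring
      have hsp : 0 < Real.sqrt (2 * D s + ε) := Real.sqrt_pos.mpr (hpos s hs0)
      have step1 : Real.sqrt (a / 2) ≤ (a + ε / 4) / Real.sqrt (2 * D s + ε) := by
        rw [le_div_iff₀ hsp, ← Real.sqrt_mul (by positivity)]
        calc Real.sqrt (a / 2 * (2 * D s + ε)) ≤ Real.sqrt ((a + ε / 4) ^ 2) := by
              apply Real.sqrt_le_sqrt; nlinarith
          _ = a + ε / 4 := Real.sqrt_sq (by positivity)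
      have hss : Real.sqrt ε ≤ Real.sqrt (2 * D s + ε) := Real.sqrt_le_sqrt (by nlinarith)
      have hsε : 0 < Real.sqrt ε := Real.sqrt_pos.mpr hε
      have step2 : (a + ε / 4) / Real.sqrt (2 * D s + ε)
          ≤ a / Real.sqrt (2 * D s + ε) + Real.sqrt ε / 4 := by
        rw [add_div]
        have h4 : ε / 4 / Real.sqrt (2 * D s + ε) ≤ ε / 4 / Real.sqrt ε := by
          gcongr
        have h5 : ε / 4 / Real.sqrt ε = Real.sqrt ε / 4 := by
          rw [div_div, mul_comm, ← div_div, Real.div_sqrt]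
        linarith
      have hrw : -(deriv D s / Real.sqrt (2 * D s + ε)) = a / Real.sqrt (2 * D s + ε) := by
        rw [ha]; ring
      rw [hnrm, hrw]
      exact step1.trans step2
    have h2 : ∫ s in t₁..t₂, ‖Ψ' s‖ ≤
        ∫ s in t₁..t₂, (-(deriv D s / Real.sqrt (2 * D s + ε)) + Real.sqrt ε / 4) := by
      apply intervalIntegral.integral_mono_on h12
      · exact (hΨ'cont.norm).intervalIntegrable _ _
      · exact ((hIntegrand.neg).add continuousOn_const).intervalIntegrable
      · intro s hs; exact hpt s (by rw [huIcc]; exact hs)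
    have h3 : ∫ s in t₁..t₂, (-(deriv D s / Real.sqrt (2 * D s + ε)) + Real.sqrt ε / 4)
        = Real.sqrt (2 * D t₁ + ε) - Real.sqrt (2 * D t₂ + ε) + (t₂ - t₁) * (Real.sqrt ε / 4) := by
      rw [intervalIntegral.integral_add (f := fun s => -(deriv D s / Real.sqrt (2 * D s + ε))) (hIntegrand.neg.intervalIntegrable)
        (intervalIntegrable_const), intervalIntegral.integral_neg, hFTC,
        intervalIntegral.integral_const, smul_eq_mul]
      ring
    linarith [h1.trans (h2.trans_eq h3)]
  have hlim : Filter.Tendsto (fun ε : ℝ => Real.sqrt (2 * D t₁ + ε) - Real.sqrt (2 * D t₂ + ε)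
      + (t₂ - t₁) * (Real.sqrt ε / 4)) (nhdsWithin 0 (Set.Ioi 0))
      (nhds (Real.sqrt (2 * D t₁) - Real.sqrt (2 * D t₂))) := by
    have h : Continuous (fun ε : ℝ => Real.sqrt (2 * D t₁ + ε) - Real.sqrt (2 * D t₂ + ε)
        + (t₂ - t₁) * (Real.sqrt ε / 4)) := by fun_prop
    have h0 := h.tendsto 0
    simp only [add_zero, Real.sqrt_zero, zero_div, mul_zero] at h0
    exact h0.mono_left nhdsWithin_le_nhds
  refine ge_of_tendsto hlim ?_
  filter_upwards [self_mem_nhdsWithin] with ε hε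
  exact key ε hε
end

section
/- Let H be a finite-dimensional complex inner product space, Ĥ a self-adjoint operator with minimal eigenvalue E₀, π₀ the orthogonal projection onto the E₀-eigenspace, E⁻ the smallest eigenvalue of Ĥ strictly greater than E₀ (assumed to exist), and E⁺ the largest eigenvalue. Then for every unit vector ψ with Ẽ = ⟨ψ, Ĥψ⟩, one has (Ẽ - E₀)/(E⁺ - E₀) ≤ 1 - ‖π₀ψ‖² ≤ (Ẽ - E₀)/(E⁻ - E₀). -/
open scoped InnerProductSpace

theorem stmt_7 {H : Type*} [NormedAddCommGroup H] [InnerProductSpace ℂ H]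
    [FiniteDimensional ℂ H]
    (A : H →ₗ[ℂ] H) (hA : ∀ x y : H, ⟪A x, y⟫_ℂ = ⟪x, A y⟫_ℂ)
    (E₀ Em Ep : ℝ)
    (hE₀mem : (E₀ : ℂ) ∈ spectrum ℂ A)
    (hE₀min : ∀ c ∈ spectrum ℂ A, ∃ r : ℝ, c = (r : ℂ) ∧ E₀ ≤ r)
    (hEmmem : (Em : ℂ) ∈ spectrum ℂ A) (hE₀Em : E₀ < Em)
    (hEmmin : ∀ r : ℝ, (r : ℂ) ∈ spectrum ℂ A → E₀ < r → Em ≤ r)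
    (hEpmem : (Ep : ℂ) ∈ spectrum ℂ A)
    (hEpmax : ∀ r : ℝ, (r : ℂ) ∈ spectrum ℂ A → r ≤ Ep)
    (ψ : H) (hψ : ‖ψ‖ = 1)
    (Et : ℝ) (hEt : (Et : ℂ) = ⟪ψ, A ψ⟫_ℂ) :
    (Et - E₀) / (Ep - E₀)
        ≤ 1 - ‖(Submodule.orthogonalProjectionOnto (Module.End.eigenspace A (E₀ : ℂ)) ψ : H)‖ ^ 2 ∧
    1 - ‖(Submodule.orthogonalProjectionOnto (Module.End.eigenspace A (E₀ : ℂ)) ψ : H)‖ ^ 2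
        ≤ (Et - E₀) / (Em - E₀) := by
  classical
  have hA' : A.IsSymmetric := hA
  have hfin : Module.finrank ℂ H = Module.finrank ℂ H := rfl
  set b := hA'.eigenvectorBasis hfin with hb
  set μ := hA'.eigenvalues hfin with hμ
  have hbi : ∀ i, A (b i) = (μ i : ℂ) • b i := hA'.apply_eigenvectorBasis hfin
  have hspec : ∀ i, ((μ i : ℂ)) ∈ spectrum ℂ A := fun i =>
    (hA'.hasEigenvalue_eigenvalues hfin i).mem_spectrum
  have hE0le : ∀ i, E₀ ≤ μ i := by
    intro i
    obtain ⟨r, hr, hr'⟩ := hE₀min _ (hspec i)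
    have : μ i = r := by exact_mod_cast hr
    linarith
  have hEple : ∀ i, μ i ≤ Ep := fun i => hEpmax _ (hspec i)
  have hEmle : ∀ i, μ i ≠ E₀ → Em ≤ μ i := fun i h =>
    hEmmin _ (hspec i) (lt_of_le_of_ne (hE0le i) (Ne.symm h))
  set c : Fin (Module.finrank ℂ H) → ℂ := fun i => b.repr ψ i with hc
  set w : Fin (Module.finrank ℂ H) → ℝ := fun i => ‖c i‖ ^ 2 with hw
  have hwnn : ∀ i, 0 ≤ w i := fun i => sq_nonneg _
  have hψsum : ∑ i, c i • b i = ψ := b.sum_repr ψ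
  have hconj : ∀ i, (starRingEnd ℂ) (c i) * c i = (w i : ℂ) := fun i => by
    rw [RCLike.conj_mul]; norm_cast
  -- sum of w is 1
  have hsum1 : ∑ i, w i = 1 := by
    have h1 : ⟪ψ, ψ⟫_ℂ = ∑ i, (starRingEnd ℂ) (c i) * c i := by
      conv_lhs => rw [← hψsum]
      exact b.orthonormal.inner_sum c c Finset.univ
    have h2 : ((∑ i, w i : ℝ) : ℂ) = ((1 : ℝ) : ℂ) := by
      push_cast
      calc (∑ i, ((w i : ℝ) : ℂ))
          = ∑ i, (starRingEnd ℂ) (c i) * c i :=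
            Finset.sum_congr rfl fun i _ => (hconj i).symm
        _ = ⟪ψ, ψ⟫_ℂ := h1.symm
        _ = ((‖ψ‖ : ℝ) : ℂ) ^ 2 := inner_self_eq_norm_sq_to_K ψ
        _ = 1 := by rw [hψ]; norm_num
    exact_mod_cast h2
  -- Et as weighted sum
  have hEtsum : Et = ∑ i, μ i * w i := by
    have hAψ : A ψ = ∑ i, ((μ i : ℂ) * c i) • b i := by
      conv_lhs => rw [← hψsum]
      rw [map_sum]
      exact Finset.sum_congr rfl fun i _ => by
        rw [map_smul, hbi, smul_smul, mul_comm]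
    have h1 : ⟪ψ, A ψ⟫_ℂ = ∑ i, (starRingEnd ℂ) (c i) * ((μ i : ℂ) * c i) := by
      rw [hAψ]
      conv_lhs => rw [← hψsum]
      exact b.orthonormal.inner_sum c _ Finset.univ
    have h2 : (Et : ℂ) = ((∑ i, μ i * w i : ℝ) : ℂ) := by
      rw [hEt, h1]
      push_cast
      refine Finset.sum_congr rfl fun i _ => ?_
      rw [show (starRingEnd ℂ) (c i) * ((μ i : ℂ) * c i)
          = (μ i : ℂ) * ((starRingEnd ℂ) (c i) * c i) by ring, hconj i]
    exact_mod_cast h2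
  -- the projection
  set S : Finset (Fin (Module.finrank ℂ H)) := Finset.univ.filter (fun i => μ i = E₀) with hS
  set v : H := ∑ i ∈ S, c i • b i with hv
  have hvmem : v ∈ Module.End.eigenspace A (E₀ : ℂ) := by
    rw [Module.End.mem_eigenspace_iff]
    rw [hv, map_sum, Finset.smul_sum]
    refine Finset.sum_congr rfl fun i hi => ?_
    have : μ i = E₀ := (Finset.mem_filter.mp hi).2
    rw [map_smul, hbi, this, smul_smul, smul_smul, mul_comm]
  have hborth : ∀ i, μ i ≠ E₀ → ∀ x ∈ Module.End.eigenspace A (E₀ : ℂ),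
      ⟪b i, x⟫_ℂ = 0 := by
    intro i hi x hx
    rw [Module.End.mem_eigenspace_iff] at hx
    have h1 : ⟪A (b i), x⟫_ℂ = ⟪b i, A x⟫_ℂ := hA _ _
    rw [hbi, hx, inner_smul_left, inner_smul_right, Complex.conj_ofReal] at h1
    have h2 : ((μ i : ℂ) - (E₀ : ℂ)) * ⟪b i, x⟫_ℂ = 0 := by
      rw [sub_mul, h1, sub_self]
    rcases mul_eq_zero.mp h2 with h | h
    · exfalso
      apply hi
      have : (μ i : ℂ) = (E₀ : ℂ) := by linear_combination h
      exact_mod_cast this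
    · exact h
  have hproj : (Submodule.orthogonalProjectionOnto (Module.End.eigenspace A (E₀ : ℂ)) ψ : H) = v := by
    rw [← Submodule.starProjection_apply]
    refine Submodule.eq_starProjection_of_mem_of_inner_eq_zero hvmem ?_
    intro x hx
    have hdiff : ψ - v = ∑ i ∈ Sᶜ, c i • b i := by
      rw [← hψsum, hv, ← Finset.sum_compl_add_sum S (fun i => c i • b i)]
      abel
    rw [hdiff, sum_inner]
    refine Finset.sum_eq_zero fun i hi => ?_
    have hiS : μ i ≠ E₀ := by
      simp only [hS, Finset.mem_compl, Finset.mem_filter, Finset.mem_univ, true_and] at hi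
      exact hi
    rw [inner_smul_left, hborth i hiS x hx, mul_zero]
  have hvnorm : ‖v‖ ^ 2 = ∑ i ∈ S, w i := by
    have h1 : ⟪v, v⟫_ℂ = ∑ i ∈ S, (starRingEnd ℂ) (c i) * c i :=
      b.orthonormal.inner_sum c c S
    have h2 : ((‖v‖ ^ 2 : ℝ) : ℂ) = ((∑ i ∈ S, w i : ℝ) : ℂ) := by
      push_cast
      calc ((‖v‖ : ℝ) : ℂ) ^ 2 = ⟪v, v⟫_ℂ := (inner_self_eq_norm_sq_to_K v).symm
        _ = ∑ i ∈ S, (starRingEnd ℂ) (c i) * c i := h1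
        _ = ∑ i ∈ S, ((w i : ℝ) : ℂ) := Finset.sum_congr rfl fun i _ => hconj i
    exact_mod_cast h2
  -- key quantities
  have hsplit : ∑ i ∈ S, w i + ∑ i ∈ Sᶜ, w i = 1 := by
    rw [Finset.sum_add_sum_compl]; exact hsum1
  set P : ℝ := ∑ i ∈ Sᶜ, w i with hP
  have hgoal : 1 - ‖(Submodule.orthogonalProjectionOnto (Module.End.eigenspace A (E₀ : ℂ)) ψ : H)‖ ^ 2 = P := by
    rw [hproj, hvnorm]; linarith
  have hEtE0 : Et - E₀ = ∑ i ∈ Sᶜ, (μ i - E₀) * w i := by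
    have : Et - E₀ = ∑ i, (μ i - E₀) * w i := by
      calc Et - E₀ = ∑ i, μ i * w i - E₀ * ∑ i, w i := by
            rw [hEtsum, hsum1, mul_one]
        _ = ∑ i, (μ i - E₀) * w i := by
            rw [Finset.mul_sum, ← Finset.sum_sub_distrib]
            exact Finset.sum_congr rfl fun i _ => by ring
    rw [this, ← Finset.sum_compl_add_sum S (fun i => (μ i - E₀) * w i)]
    have hz : ∑ i ∈ S, (μ i - E₀) * w i = 0 := by
      refine Finset.sum_eq_zero fun i hi => ?_
      have : μ i = E₀ := (Finset.mem_filter.mp hi).2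
      rw [this, sub_self, zero_mul]
    rw [hz]; ring
  have hlow : (Em - E₀) * P ≤ Et - E₀ := by
    rw [hEtE0, hP, Finset.mul_sum]
    refine Finset.sum_le_sum fun i hi => ?_
    have hiS : μ i ≠ E₀ := by
      simp only [hS, Finset.mem_compl, Finset.mem_filter, Finset.mem_univ, true_and] at hi
      exact hi
    exact mul_le_mul_of_nonneg_right (by linarith [hEmle i hiS]) (hwnn i)
  have hhigh : Et - E₀ ≤ (Ep - E₀) * P := by
    rw [hEtE0, hP, Finset.mul_sum]
    refine Finset.sum_le_sum fun i hi => ?_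
    exact mul_le_mul_of_nonneg_right (by linarith [hEple i]) (hwnn i)
  have hEmE0 : 0 < Em - E₀ := by linarith
  have hEpE0 : 0 < Ep - E₀ := by
    have : Em ≤ Ep := hEpmax Em hEmmem
    linarith
  constructor
  · rw [hgoal, div_le_iff₀ hEpE0]
    linarith
  · rw [hgoal, le_div_iff₀ hEmE0]
    linarith
end

section
/- Let H be a finite-dimensional complex inner product space, Ĥ self-adjoint with nondegenerate minimal eigenvalue E₀ and unit ground state ψ₀, and let E⁺ be the largest eigenvalue of Ĥ. Let P be an orthogonal projection on H with Pψ₀ ≠ 0, and define E_P = min over unit vectors φ in the range of P of ⟨φ, Ĥφ⟩. Then E_P - E₀ ≤ (E⁺ - E₀)(1 - ‖Pψ₀‖²). -/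
open scoped InnerProductSpace

theorem quad_form_bounds {H : Type*} [NormedAddCommGroup H] [InnerProductSpace ℂ H]
    [FiniteDimensional ℂ H]
    (A : H →ₗ[ℂ] H) (hA : ∀ x y : H, ⟪A x, y⟫_ℂ = ⟪x, A y⟫_ℂ)
    (E₀ Ep : ℝ)
    (hE₀min : ∀ c ∈ spectrum ℂ A, ∃ r : ℝ, c = (r : ℂ) ∧ E₀ ≤ r)
    (hEpmax : ∀ r : ℝ, (r : ℂ) ∈ spectrum ℂ A → r ≤ Ep) :
    ∀ x : H, ∃ s : ℝ, ⟪x, A x⟫_ℂ = (s : ℂ) ∧ E₀ * ‖x‖^2 ≤ s ∧ s ≤ Ep * ‖x‖^2 := by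
  have hA' : A.IsSymmetric := hA
  have hn : Module.finrank ℂ H = Module.finrank ℂ H := rfl
  set b := hA'.eigenvectorBasis hn with hb
  set μ := hA'.eigenvalues hn with hμdef
  have hμmem : ∀ i, ((μ i : ℝ) : ℂ) ∈ spectrum ℂ A := fun i =>
    (hA'.hasEigenvalue_eigenvalues hn i).mem_spectrum
  have hμlo : ∀ i, E₀ ≤ μ i := by
    intro i
    obtain ⟨r, hr, hr'⟩ := hE₀min _ (hμmem i)
    have : r = μ i := by exact_mod_cast hr.symm
    rwa [this] at hr'
  have hμhi : ∀ i, μ i ≤ Ep := fun i => hEpmax _ (hμmem i)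
  intro x
  have hterm : ∀ i, ⟪x, b i⟫_ℂ * ⟪b i, x⟫_ℂ = ((‖⟪b i, x⟫_ℂ‖^2 : ℝ) : ℂ) := by
    intro i
    rw [← inner_conj_symm x (b i), Complex.conj_mul']
    norm_cast
  have hpar : (‖x‖^2 : ℝ) = ∑ i, ‖⟪b i, x⟫_ℂ‖^2 := by
    have h := b.sum_inner_mul_inner x x
    rw [inner_self_eq_norm_sq_to_K] at h
    have h2 : ∑ i, ((‖⟪b i, x⟫_ℂ‖^2 : ℝ) : ℂ) = ∑ i, ⟪x, b i⟫_ℂ * ⟪b i, x⟫_ℂ :=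
      Finset.sum_congr rfl fun i _ => (hterm i).symm
    rw [h] at h2
    norm_cast at h2
    exact Complex.ofReal_inj.mp h2.symm
  refine ⟨∑ i, μ i * ‖⟪b i, x⟫_ℂ‖^2, ?_, ?_, ?_⟩
  · rw [← b.sum_inner_mul_inner x (A x)]
    push_cast
    refine Finset.sum_congr rfl fun i _ => ?_
    have h1 : ⟪b i, A x⟫_ℂ = (μ i : ℂ) * ⟪b i, x⟫_ℂ := by
      rw [← hA (b i) x, hA'.apply_eigenvectorBasis hn i, inner_smul_left]
      simp
      rfl
    rw [h1, show ⟪x, b i⟫_ℂ * ((μ i : ℂ) * ⟪b i, x⟫_ℂ)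
        = (μ i : ℂ) * (⟪x, b i⟫_ℂ * ⟪b i, x⟫_ℂ) by ring, hterm i]
    norm_cast
  · rw [hpar, Finset.mul_sum]
    exact Finset.sum_le_sum fun i _ => by nlinarith [hμlo i, sq_nonneg ‖⟪b i, x⟫_ℂ‖]
  · rw [hpar, Finset.mul_sum]
    exact Finset.sum_le_sum fun i _ => by nlinarith [hμhi i, sq_nonneg ‖⟪b i, x⟫_ℂ‖]

theorem stmt_8 {H : Type*} [NormedAddCommGroup H] [InnerProductSpace ℂ H]
    [FiniteDimensional ℂ H]
    (A : H →ₗ[ℂ] H) (hA : ∀ x y : H, ⟪A x, y⟫_ℂ = ⟪x, A y⟫_ℂ)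
    (E₀ Ep : ℝ) (ψ₀ : H) (hψ₀ : ‖ψ₀‖ = 1)
    (hground : A ψ₀ = (E₀ : ℂ) • ψ₀)
    (hnondeg : Module.End.eigenspace A (E₀ : ℂ) = Submodule.span ℂ {ψ₀})
    (hE₀min : ∀ c ∈ spectrum ℂ A, ∃ r : ℝ, c = (r : ℂ) ∧ E₀ ≤ r)
    (hEpmem : (Ep : ℂ) ∈ spectrum ℂ A)
    (hEpmax : ∀ r : ℝ, (r : ℂ) ∈ spectrum ℂ A → r ≤ Ep)
    (P : H →ₗ[ℂ] H) (hPsym : ∀ x y : H, ⟪P x, y⟫_ℂ = ⟪x, P y⟫_ℂ)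
    (hPidem : P ∘ₗ P = P)
    (hPψ₀ : P ψ₀ ≠ 0)
    (EP : ℝ)
    (hEP : EP = sInf {e : ℝ | ∃ φ : H, ‖φ‖ = 1 ∧ P φ = φ ∧ (e : ℂ) = ⟪φ, A φ⟫_ℂ}) :
    EP - E₀ ≤ (Ep - E₀) * (1 - ‖P ψ₀‖ ^ 2) := by
  have key := quad_form_bounds A hA E₀ Ep hE₀min hEpmax
  set χ := P ψ₀ with hχ
  have hPχ : P χ = χ := by
    have := congrArg (fun f : H →ₗ[ℂ] H => f ψ₀) hPidem
    simpa using this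
  set a := ‖χ‖ ^ 2 with hadef
  have hχ0 : χ ≠ 0 := hPψ₀
  have hχn0 : ‖χ‖ ≠ 0 := norm_ne_zero_iff.mpr hχ0
  have ha : 0 < a := pow_pos (norm_pos_iff.mpr hχ0) 2
  have hψχ : ⟪ψ₀, χ⟫_ℂ = (a : ℂ) := by
    calc ⟪ψ₀, χ⟫_ℂ = ⟪ψ₀, P χ⟫_ℂ := by rw [hPχ]
      _ = ⟪P ψ₀, χ⟫_ℂ := (hPsym ψ₀ χ).symm
      _ = ⟪χ, χ⟫_ℂ := rfl
      _ = (a : ℂ) := by rw [inner_self_eq_norm_sq_to_K]; norm_cast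
  have hχχ : ⟪χ, χ⟫_ℂ = (a : ℂ) := by
    rw [inner_self_eq_norm_sq_to_K]; norm_cast
  have hχψ : ⟪χ, ψ₀⟫_ℂ = (a : ℂ) := by
    rw [← inner_conj_symm χ ψ₀, hψχ, Complex.conj_ofReal]
  set w := χ - (a : ℂ) • ψ₀ with hwdef
  have hψψ : ⟪ψ₀, ψ₀⟫_ℂ = 1 := by
    rw [inner_self_eq_norm_sq_to_K, hψ₀]; norm_num
  have hψw : ⟪ψ₀, w⟫_ℂ = 0 := by
    rw [hwdef, inner_sub_right, inner_smul_right, hψχ, hψψ]; ring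
  have hwψ : ⟪w, ψ₀⟫_ℂ = 0 := by
    rw [← inner_conj_symm w ψ₀, hψw]; simp
  have hww : ⟪w, w⟫_ℂ = ((a - a ^ 2 : ℝ) : ℂ) := by
    rw [hwdef]
    simp only [inner_sub_left, inner_sub_right, inner_smul_left, inner_smul_right,
      hχχ, hχψ, hψχ, hψψ, Complex.conj_ofReal]
    push_cast; ring
  have hnw : ‖w‖ ^ 2 = a - a ^ 2 := by
    have h1 := hww
    rw [inner_self_eq_norm_sq_to_K] at h1
    have h2 : ((‖w‖ ^ 2 : ℝ) : ℂ) = ((a - a ^ 2 : ℝ) : ℂ) := by push_cast at h1 ⊢; exact h1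
    exact Complex.ofReal_inj.mp h2
  have hAψw : ⟪ψ₀, A w⟫_ℂ = 0 := by
    rw [← hA ψ₀ w, hground, inner_smul_left, hψw]; ring
  have hAwψ : ⟪w, A ψ₀⟫_ℂ = 0 := by
    rw [hground, inner_smul_right, hwψ]; ring
  have hχeq : χ = (a : ℂ) • ψ₀ + w := by rw [hwdef]; abel
  have hAχ : ⟪χ, A χ⟫_ℂ = ((a ^ 2 * E₀ : ℝ) : ℂ) + ⟪w, A w⟫_ℂ := by
    conv_lhs => rw [hχeq]
    simp only [map_add, map_smul, inner_add_left, inner_add_right, inner_smul_left,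
      inner_smul_right, hground, hψψ, hAψw, hAwψ, hψw, hwψ, Complex.conj_ofReal,
      mul_one, mul_zero, add_zero, zero_add]
    push_cast; ring
  obtain ⟨s, hs, hslo, hshi⟩ := key w
  rw [hnw] at hslo hshi
  -- trial vector
  set φ := ((‖χ‖ : ℂ))⁻¹ • χ with hφdef
  have hcn0 : ((‖χ‖ : ℂ)) ≠ 0 := by exact_mod_cast hχn0
  have hφnorm : ‖φ‖ = 1 := by
    rw [hφdef, norm_smul]
    simp [hχn0]
  have hPφ : P φ = φ := by rw [hφdef, map_smul, hPχ]
  obtain ⟨t, ht, htlo, hthi⟩ := key φ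
  have hχφ : χ = ((‖χ‖ : ℂ)) • φ := by
    rw [hφdef, smul_smul, mul_inv_cancel₀ hcn0, one_smul]
  have hat : a * t = a ^ 2 * E₀ + s := by
    have h1 : ⟪χ, A χ⟫_ℂ = ((a : ℝ) : ℂ) * (t : ℂ) := by
      conv_lhs => rw [hχφ]
      rw [map_smul, inner_smul_left, inner_smul_right, ht, Complex.conj_ofReal]
      rw [hadef]; push_cast; ring
    rw [hAχ, hs] at h1
    have h2 : ((a ^ 2 * E₀ + s : ℝ) : ℂ) = ((a * t : ℝ) : ℂ) := by push_cast at h1 ⊢; linear_combination h1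
    exact (Complex.ofReal_inj.mp h2).symm
  -- EP ≤ t
  have hbdd : BddBelow {e : ℝ | ∃ φ : H, ‖φ‖ = 1 ∧ P φ = φ ∧ (e : ℂ) = ⟪φ, A φ⟫_ℂ} := by
    refine ⟨E₀, fun e' he' => ?_⟩
    obtain ⟨φ', h1, h2, h3⟩ := he'
    obtain ⟨s', hs', hlo', _⟩ := key φ'
    rw [hs'] at h3
    have he : e' = s' := by exact_mod_cast h3
    rw [he]
    calc E₀ = E₀ * ‖φ'‖ ^ 2 := by rw [h1]; ring
      _ ≤ s' := hlo'
  have hEPle : EP ≤ t := by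
    rw [hEP]
    exact csInf_le hbdd ⟨φ, hφnorm, hPφ, ht.symm⟩
  have hfin : a * (t - E₀) ≤ a * ((Ep - E₀) * (1 - a)) := by nlinarith [hshi, hat]
  have := (mul_le_mul_iff_right₀ ha).mp hfin
  linarith [hEPle]
end

section
/- For a three-qubit pure state with single-qubit reduced density matrices ρ₁, ρ₂, ρ₃ having smaller eigenvalues λ₁⁽²⁾, λ₂⁽²⁾, λ₃⁽²⁾ respectively, the inequality λ₁⁽²⁾ ≤ λ₂⁽²⁾ + λ₃⁽²⁾ holds. -/
open Finset Complex

lemma cs2' (p0 p1 u0 u1 : ℂ) :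
    normSq (p0 * u0 + p1 * u1) ≤ (normSq p0 + normSq p1) * (normSq u0 + normSq u1) := by
  have key : (normSq p0 + normSq p1) * (normSq u0 + normSq u1) - normSq (p0*u0 + p1*u1)
      = normSq ((starRingEnd ℂ) p0 * u1 - (starRingEnd ℂ) p1 * u0) := by
    simp only [Complex.normSq_apply, Complex.add_re, Complex.add_im, Complex.mul_re,
      Complex.mul_im, Complex.sub_re, Complex.sub_im, Complex.conj_re, Complex.conj_im]
    ring
  nlinarith [Complex.normSq_nonneg ((starRingEnd ℂ) p0 * u1 - (starRingEnd ℂ) p1 * u0)]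

lemma cs4' (p0 p1 p2 p3 u0 u1 u2 u3 : ℂ) :
    normSq (p0 * u0 + p1 * u1 + p2 * u2 + p3 * u3) ≤
      (normSq p0 + normSq p1 + normSq p2 + normSq p3) *
      (normSq u0 + normSq u1 + normSq u2 + normSq u3) := by
  have key : (normSq p0 + normSq p1 + normSq p2 + normSq p3) *
      (normSq u0 + normSq u1 + normSq u2 + normSq u3)
      - normSq (p0 * u0 + p1 * u1 + p2 * u2 + p3 * u3)
      = normSq ((starRingEnd ℂ) p0 * u1 - (starRingEnd ℂ) p1 * u0)
      + normSq ((starRingEnd ℂ) p0 * u2 - (starRingEnd ℂ) p2 * u0)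
      + normSq ((starRingEnd ℂ) p0 * u3 - (starRingEnd ℂ) p3 * u0)
      + normSq ((starRingEnd ℂ) p1 * u2 - (starRingEnd ℂ) p2 * u1)
      + normSq ((starRingEnd ℂ) p1 * u3 - (starRingEnd ℂ) p3 * u1)
      + normSq ((starRingEnd ℂ) p2 * u3 - (starRingEnd ℂ) p3 * u2) := by
    simp only [Complex.normSq_apply, Complex.add_re, Complex.add_im, Complex.mul_re,
      Complex.mul_im, Complex.sub_re, Complex.sub_im, Complex.conj_re, Complex.conj_im]
    ring
  nlinarith [Complex.normSq_nonneg ((starRingEnd ℂ) p0 * u1 - (starRingEnd ℂ) p1 * u0),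
    Complex.normSq_nonneg ((starRingEnd ℂ) p0 * u2 - (starRingEnd ℂ) p2 * u0),
    Complex.normSq_nonneg ((starRingEnd ℂ) p0 * u3 - (starRingEnd ℂ) p3 * u0),
    Complex.normSq_nonneg ((starRingEnd ℂ) p1 * u2 - (starRingEnd ℂ) p2 * u1),
    Complex.normSq_nonneg ((starRingEnd ℂ) p1 * u3 - (starRingEnd ℂ) p3 * u1),
    Complex.normSq_nonneg ((starRingEnd ℂ) p2 * u3 - (starRingEnd ℂ) p3 * u2)]

lemma det_of_eig (t l : ℝ) (b : ℂ) {w0 w1 : ℂ} (hw : w0 ≠ 0 ∨ w1 ≠ 0)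
    (e0 : (t : ℂ) * w0 + b * w1 = (l : ℂ) * w0)
    (e1 : (starRingEnd ℂ) b * w0 + (1 - (t : ℂ)) * w1 = (l : ℂ) * w1) :
    (t - l) * (1 - t - l) = Complex.normSq b := by
  have h0 : (b * (starRingEnd ℂ) b) * w0 = (((t : ℂ) - l) * (1 - t - l)) * w0 := by
    linear_combination b * e1 + ((l : ℂ) - 1 + t) * e0
  have h1 : (b * (starRingEnd ℂ) b) * w1 = (((t : ℂ) - l) * (1 - t - l)) * w1 := by
    linear_combination (starRingEnd ℂ) b * e0 + ((l : ℂ) - t) * e1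
  have hb : (b * (starRingEnd ℂ) b) = ((t : ℂ) - l) * (1 - t - l) := by
    rcases hw with h | h
    · exact mul_right_cancel₀ h h0
    · exact mul_right_cancel₀ h h1
  rw [Complex.mul_conj] at hb
  have := congrArg Complex.re hb
  simpa using this.symm

lemma quad (t l : ℝ) (b : ℂ) (hl : l ≤ 1/2)
    (hdet : (t - l) * (1 - t - l) = Complex.normSq b) (v0 v1 : ℂ) :
    ((starRingEnd ℂ) v0 * ((t : ℂ) * v0 + b * v1) +
      (starRingEnd ℂ) v1 * ((starRingEnd ℂ) b * v0 + (1 - (t : ℂ)) * v1)).re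
      ≤ (1 - l) * (Complex.normSq v0 + Complex.normSq v1) := by
  set p : ℝ := 1 - l - t with hp'
  set q : ℝ := t - l with hq'
  have hpq : q * p = Complex.normSq b := by rw [hp', hq']; linear_combination hdet
  have hp : 0 ≤ p := by nlinarith [Complex.normSq_nonneg b]
  have hq : 0 ≤ q := by nlinarith [Complex.normSq_nonneg b]
  have key : p * ((1 - l) * (Complex.normSq v0 + Complex.normSq v1)
      - ((starRingEnd ℂ) v0 * ((t : ℂ) * v0 + b * v1) +
        (starRingEnd ℂ) v1 * ((starRingEnd ℂ) b * v0 + (1 - (t : ℂ)) * v1)).re)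
      = Complex.normSq ((p : ℂ) * v0 - b * v1) := by
    simp only [Complex.normSq_apply, Complex.add_re, Complex.add_im, Complex.mul_re,
      Complex.mul_im, Complex.sub_re, Complex.sub_im, Complex.conj_re, Complex.conj_im,
      Complex.ofReal_re, Complex.ofReal_im, Complex.one_re, Complex.one_im] at *
    linear_combination (v1.re * v1.re + v1.im * v1.im) * hpq
  rcases eq_or_lt_of_le hp with h | h
  · have hb0 : Complex.normSq b = 0 := by rw [← hpq, ← h]; ring
    have hb : b = 0 := by rwa [Complex.normSq_eq_zero] at hb0
    subst hb
    have ht : t = 1 - l := by simp [hp'] at h; linarith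
    subst ht
    simp only [map_zero, zero_mul, mul_zero, add_zero, zero_add]
    simp only [Complex.add_re, Complex.mul_re, Complex.mul_im, Complex.conj_re, Complex.conj_im,
      Complex.ofReal_re, Complex.ofReal_im, Complex.one_re, Complex.one_im, Complex.sub_re,
      Complex.sub_im, Complex.normSq_apply]
    nlinarith [sq_nonneg v1.re, sq_nonneg v1.im, sq_nonneg v0.re, sq_nonneg v0.im]
  · nlinarith [Complex.normSq_nonneg ((p : ℂ) * v0 - b * v1), key, h]

lemma ne2 (u : Fin 2 → ℂ) (h : u ≠ 0) : u 0 ≠ 0 ∨ u 1 ≠ 0 := by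
  by_contra hc; push_neg at hc
  exact h (funext fun m => by fin_cases m <;> simp [hc.1, hc.2])

lemma pos2 (u : Fin 2 → ℂ) (h : u ≠ 0) :
    0 < Complex.normSq (u 0) + Complex.normSq (u 1) := by
  rcases ne2 u h with h' | h'
  · nlinarith [Complex.normSq_pos.mpr h', Complex.normSq_nonneg (u 1)]
  · nlinarith [Complex.normSq_pos.mpr h', Complex.normSq_nonneg (u 0)]

set_option maxHeartbeats 3200000 in
theorem stmt_14 (c : Fin 2 → Fin 2 → Fin 2 → ℂ)
    (hnorm : ∑ i, ∑ j, ∑ k, ‖c i j k‖ ^ 2 = 1)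
    (ρ₁ ρ₂ ρ₃ : Matrix (Fin 2) (Fin 2) ℂ)
    (hρ₁ : ρ₁ = Matrix.of fun i i' => ∑ j, ∑ k, c i j k * (starRingEnd ℂ) (c i' j k))
    (hρ₂ : ρ₂ = Matrix.of fun j j' => ∑ i, ∑ k, c i j k * (starRingEnd ℂ) (c i j' k))
    (hρ₃ : ρ₃ = Matrix.of fun k k' => ∑ i, ∑ j, c i j k * (starRingEnd ℂ) (c i j k'))
    (lam₁ lam₂ lam₃ : ℝ)
    (hlam₁ : lam₁ ≤ 1 / 2) (hlam₂ : lam₂ ≤ 1 / 2) (hlam₃ : lam₃ ≤ 1 / 2)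
    (hev₁ : ∃ v : Fin 2 → ℂ, v ≠ 0 ∧ ρ₁.mulVec v = (lam₁ : ℂ) • v)
    (hev₂ : ∃ v : Fin 2 → ℂ, v ≠ 0 ∧ ρ₂.mulVec v = (lam₂ : ℂ) • v)
    (hev₃ : ∃ v : Fin 2 → ℂ, v ≠ 0 ∧ ρ₃.mulVec v = (lam₃ : ℂ) • v) :
    lam₁ ≤ lam₂ + lam₃ := by
  subst hρ₁ hρ₂ hρ₃
  obtain ⟨w, hwne, hw⟩ := hev₁
  obtain ⟨y, hyne, hy⟩ := hev₂
  obtain ⟨z, hzne, hz⟩ := hev₃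
  have hw0 := congrFun hw 0
  have hw1 := congrFun hw 1
  have hy0 := congrFun hy 0
  have hy1 := congrFun hy 1
  have hz0 := congrFun hz 0
  have hz1 := congrFun hz 1
  simp only [Matrix.mulVec, dotProduct, Matrix.of_apply, Fin.sum_univ_two,
    Pi.smul_apply, smul_eq_mul] at hw0 hw1 hy0 hy1 hz0 hz1
  have hy0c := congrArg (starRingEnd ℂ) hy0
  have hy1c := congrArg (starRingEnd ℂ) hy1
  have hz0c := congrArg (starRingEnd ℂ) hz0
  have hz1c := congrArg (starRingEnd ℂ) hz1
  simp only [map_add, map_mul, Complex.conj_conj, Complex.conj_ofReal] at hy0c hy1c hz0c hz1c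
  have hN : (Complex.normSq (c 0 0 0) + Complex.normSq (c 0 0 1) + Complex.normSq (c 0 1 0) + Complex.normSq (c 0 1 1) + Complex.normSq (c 1 0 0) + Complex.normSq (c 1 0 1) + Complex.normSq (c 1 1 0) + Complex.normSq (c 1 1 1)) = 1 := by
    have h := hnorm
    simp only [Fin.sum_univ_two, Complex.sq_norm] at h
    linarith
  have hTc : (c 0 0 0 * (starRingEnd ℂ) (c 0 0 0) + c 0 0 1 * (starRingEnd ℂ) (c 0 0 1) + c 0 1 0 * (starRingEnd ℂ) (c 0 1 0) + c 0 1 1 * (starRingEnd ℂ) (c 0 1 1) + c 1 0 0 * (starRingEnd ℂ) (c 1 0 0) + c 1 0 1 * (starRingEnd ℂ) (c 1 0 1) + c 1 1 0 * (starRingEnd ℂ) (c 1 1 0) + c 1 1 1 * (starRingEnd ℂ) (c 1 1 1)) = (1 : ℂ) := by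
    rw [← Complex.ofReal_one, ← hN]
    push_cast [← Complex.mul_conj]
    ring
  obtain ⟨a00, ha00⟩ : ∃ x : ℂ, x = (-(y 1) * (c 0 0 0) + (y 0) * (c 0 1 0)) := ⟨_, rfl⟩
  have ha00c : (starRingEnd ℂ) a00 = (-(starRingEnd ℂ) (y 1) * (starRingEnd ℂ) (c 0 0 0) + (starRingEnd ℂ) (y 0) * (starRingEnd ℂ) (c 0 1 0)) := by
    rw [ha00]; simp only [map_add, map_mul, map_neg, Complex.conj_conj]; all_goals ring
  obtain ⟨a01, ha01⟩ : ∃ x : ℂ, x = (-(y 1) * (c 0 0 1) + (y 0) * (c 0 1 1)) := ⟨_, rfl⟩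
  have ha01c : (starRingEnd ℂ) a01 = (-(starRingEnd ℂ) (y 1) * (starRingEnd ℂ) (c 0 0 1) + (starRingEnd ℂ) (y 0) * (starRingEnd ℂ) (c 0 1 1)) := by
    rw [ha01]; simp only [map_add, map_mul, map_neg, Complex.conj_conj]; all_goals ring
  obtain ⟨a10, ha10⟩ : ∃ x : ℂ, x = (-(y 1) * (c 1 0 0) + (y 0) * (c 1 1 0)) := ⟨_, rfl⟩
  have ha10c : (starRingEnd ℂ) a10 = (-(starRingEnd ℂ) (y 1) * (starRingEnd ℂ) (c 1 0 0) + (starRingEnd ℂ) (y 0) * (starRingEnd ℂ) (c 1 1 0)) := by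
    rw [ha10]; simp only [map_add, map_mul, map_neg, Complex.conj_conj]; all_goals ring
  obtain ⟨a11, ha11⟩ : ∃ x : ℂ, x = (-(y 1) * (c 1 0 1) + (y 0) * (c 1 1 1)) := ⟨_, rfl⟩
  have ha11c : (starRingEnd ℂ) a11 = (-(starRingEnd ℂ) (y 1) * (starRingEnd ℂ) (c 1 0 1) + (starRingEnd ℂ) (y 0) * (starRingEnd ℂ) (c 1 1 1)) := by
    rw [ha11]; simp only [map_add, map_mul, map_neg, Complex.conj_conj]; all_goals ring
  obtain ⟨b00, hb00⟩ : ∃ x : ℂ, x = (-(z 1) * (c 0 0 0) + (z 0) * (c 0 0 1)) := ⟨_, rfl⟩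
  have hb00c : (starRingEnd ℂ) b00 = (-(starRingEnd ℂ) (z 1) * (starRingEnd ℂ) (c 0 0 0) + (starRingEnd ℂ) (z 0) * (starRingEnd ℂ) (c 0 0 1)) := by
    rw [hb00]; simp only [map_add, map_mul, map_neg, Complex.conj_conj]; all_goals ring
  obtain ⟨b01, hb01⟩ : ∃ x : ℂ, x = (-(z 1) * (c 0 1 0) + (z 0) * (c 0 1 1)) := ⟨_, rfl⟩
  have hb01c : (starRingEnd ℂ) b01 = (-(starRingEnd ℂ) (z 1) * (starRingEnd ℂ) (c 0 1 0) + (starRingEnd ℂ) (z 0) * (starRingEnd ℂ) (c 0 1 1)) := by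
    rw [hb01]; simp only [map_add, map_mul, map_neg, Complex.conj_conj]; all_goals ring
  obtain ⟨b10, hb10⟩ : ∃ x : ℂ, x = (-(z 1) * (c 1 0 0) + (z 0) * (c 1 0 1)) := ⟨_, rfl⟩
  have hb10c : (starRingEnd ℂ) b10 = (-(starRingEnd ℂ) (z 1) * (starRingEnd ℂ) (c 1 0 0) + (starRingEnd ℂ) (z 0) * (starRingEnd ℂ) (c 1 0 1)) := by
    rw [hb10]; simp only [map_add, map_mul, map_neg, Complex.conj_conj]; all_goals ring
  obtain ⟨b11, hb11⟩ : ∃ x : ℂ, x = (-(z 1) * (c 1 1 0) + (z 0) * (c 1 1 1)) := ⟨_, rfl⟩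
  have hb11c : (starRingEnd ℂ) b11 = (-(starRingEnd ℂ) (z 1) * (starRingEnd ℂ) (c 1 1 0) + (starRingEnd ℂ) (z 0) * (starRingEnd ℂ) (c 1 1 1)) := by
    rw [hb11]; simp only [map_add, map_mul, map_neg, Complex.conj_conj]; all_goals ring
  obtain ⟨v0, hv0⟩ : ∃ x : ℂ, x = ((y 1) * (z 1) * (c 0 0 0) + -(y 1) * (z 0) * (c 0 0 1) + -(y 0) * (z 1) * (c 0 1 0) + (y 0) * (z 0) * (c 0 1 1)) := ⟨_, rfl⟩
  have hv0c : (starRingEnd ℂ) v0 = ((starRingEnd ℂ) (y 1) * (starRingEnd ℂ) (z 1) * (starRingEnd ℂ) (c 0 0 0) + -(starRingEnd ℂ) (y 1) * (starRingEnd ℂ) (z 0) * (starRingEnd ℂ) (c 0 0 1) + -(starRingEnd ℂ) (y 0) * (starRingEnd ℂ) (z 1) * (starRingEnd ℂ) (c 0 1 0) + (starRingEnd ℂ) (y 0) * (starRingEnd ℂ) (z 0) * (starRingEnd ℂ) (c 0 1 1)) := by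
    rw [hv0]; simp only [map_add, map_mul, map_neg, Complex.conj_conj]; all_goals ring
  obtain ⟨v1, hv1⟩ : ∃ x : ℂ, x = ((y 1) * (z 1) * (c 1 0 0) + -(y 1) * (z 0) * (c 1 0 1) + -(y 0) * (z 1) * (c 1 1 0) + (y 0) * (z 0) * (c 1 1 1)) := ⟨_, rfl⟩
  have hv1c : (starRingEnd ℂ) v1 = ((starRingEnd ℂ) (y 1) * (starRingEnd ℂ) (z 1) * (starRingEnd ℂ) (c 1 0 0) + -(starRingEnd ℂ) (y 1) * (starRingEnd ℂ) (z 0) * (starRingEnd ℂ) (c 1 0 1) + -(starRingEnd ℂ) (y 0) * (starRingEnd ℂ) (z 1) * (starRingEnd ℂ) (c 1 1 0) + (starRingEnd ℂ) (y 0) * (starRingEnd ℂ) (z 0) * (starRingEnd ℂ) (c 1 1 1)) := by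
    rw [hv1]; simp only [map_add, map_mul, map_neg, Complex.conj_conj]; all_goals ring
  obtain ⟨bB, hbB⟩ : ∃ x : ℂ, x = ((c 0 0 0) * (starRingEnd ℂ) (c 1 0 0) + (c 0 0 1) * (starRingEnd ℂ) (c 1 0 1) + (c 0 1 0) * (starRingEnd ℂ) (c 1 1 0) + (c 0 1 1) * (starRingEnd ℂ) (c 1 1 1)) := ⟨_, rfl⟩
  have hbBc : (starRingEnd ℂ) bB = ((starRingEnd ℂ) (c 0 0 0) * (c 1 0 0) + (starRingEnd ℂ) (c 0 0 1) * (c 1 0 1) + (starRingEnd ℂ) (c 0 1 0) * (c 1 1 0) + (starRingEnd ℂ) (c 0 1 1) * (c 1 1 1)) := by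
    rw [hbB]; simp only [map_add, map_mul, map_neg, Complex.conj_conj]; all_goals ring
  obtain ⟨tt, htt⟩ : ∃ x : ℝ, x = (Complex.normSq (c 0 0 0) + Complex.normSq (c 0 0 1) + Complex.normSq (c 0 1 0) + Complex.normSq (c 0 1 1)) := ⟨_, rfl⟩
  have ey0 : (c 0 0 0 * (starRingEnd ℂ) (c 0 0 0) + c 0 0 1 * (starRingEnd ℂ) (c 0 0 1) + c 1 0 0 * (starRingEnd ℂ) (c 1 0 0) + c 1 0 1 * (starRingEnd ℂ) (c 1 0 1)) * (-(starRingEnd ℂ) (y 1)) + (c 0 0 0 * (starRingEnd ℂ) (c 0 1 0) + c 0 0 1 * (starRingEnd ℂ) (c 0 1 1) + c 1 0 0 * (starRingEnd ℂ) (c 1 1 0) + c 1 0 1 * (starRingEnd ℂ) (c 1 1 1)) * ((starRingEnd ℂ) (y 0)) = (1 - (lam₂ : ℂ)) * (-(starRingEnd ℂ) (y 1)) := by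
    linear_combination hy1c - (starRingEnd ℂ) (y 1) * hTc
  have ey1 : (c 0 1 0 * (starRingEnd ℂ) (c 0 0 0) + c 0 1 1 * (starRingEnd ℂ) (c 0 0 1) + c 1 1 0 * (starRingEnd ℂ) (c 1 0 0) + c 1 1 1 * (starRingEnd ℂ) (c 1 0 1)) * (-(starRingEnd ℂ) (y 1)) + (c 0 1 0 * (starRingEnd ℂ) (c 0 1 0) + c 0 1 1 * (starRingEnd ℂ) (c 0 1 1) + c 1 1 0 * (starRingEnd ℂ) (c 1 1 0) + c 1 1 1 * (starRingEnd ℂ) (c 1 1 1)) * ((starRingEnd ℂ) (y 0)) = (1 - (lam₂ : ℂ)) * ((starRingEnd ℂ) (y 0)) := by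
    linear_combination (-1 : ℂ) * hy0c + (starRingEnd ℂ) (y 0) * hTc
  have ez0 : (c 0 0 0 * (starRingEnd ℂ) (c 0 0 0) + c 0 1 0 * (starRingEnd ℂ) (c 0 1 0) + c 1 0 0 * (starRingEnd ℂ) (c 1 0 0) + c 1 1 0 * (starRingEnd ℂ) (c 1 1 0)) * (-(starRingEnd ℂ) (z 1)) + (c 0 0 0 * (starRingEnd ℂ) (c 0 0 1) + c 0 1 0 * (starRingEnd ℂ) (c 0 1 1) + c 1 0 0 * (starRingEnd ℂ) (c 1 0 1) + c 1 1 0 * (starRingEnd ℂ) (c 1 1 1)) * ((starRingEnd ℂ) (z 0)) = (1 - (lam₃ : ℂ)) * (-(starRingEnd ℂ) (z 1)) := by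
    linear_combination hz1c - (starRingEnd ℂ) (z 1) * hTc
  have ez1 : (c 0 0 1 * (starRingEnd ℂ) (c 0 0 0) + c 0 1 1 * (starRingEnd ℂ) (c 0 1 0) + c 1 0 1 * (starRingEnd ℂ) (c 1 0 0) + c 1 1 1 * (starRingEnd ℂ) (c 1 1 0)) * (-(starRingEnd ℂ) (z 1)) + (c 0 0 1 * (starRingEnd ℂ) (c 0 0 1) + c 0 1 1 * (starRingEnd ℂ) (c 0 1 1) + c 1 0 1 * (starRingEnd ℂ) (c 1 0 1) + c 1 1 1 * (starRingEnd ℂ) (c 1 1 1)) * ((starRingEnd ℂ) (z 0)) = (1 - (lam₃ : ℂ)) * ((starRingEnd ℂ) (z 0)) := by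
    linear_combination (-1 : ℂ) * hz0c + (starRingEnd ℂ) (z 0) * hTc
  have hS2 : (Complex.normSq a00 + Complex.normSq a01 + Complex.normSq a10 + Complex.normSq a11) = (1 - lam₂) * (Complex.normSq (y 0) + Complex.normSq (y 1)) := by
    rw [← Complex.ofReal_inj]
    push_cast [← Complex.mul_conj]
    simp only [ha00c, ha01c, ha10c, ha11c, hb00c, hb01c, hb10c, hb11c, hv0c, hv1c, hbBc]
    simp only [ha00, ha01, ha10, ha11, hb00, hb01, hb10, hb11, hv0, hv1, hbB]
    linear_combination (-(y 1)) * ey0 + (y 0) * ey1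
  have hS3 : (Complex.normSq b00 + Complex.normSq b01 + Complex.normSq b10 + Complex.normSq b11) = (1 - lam₃) * (Complex.normSq (z 0) + Complex.normSq (z 1)) := by
    rw [← Complex.ofReal_inj]
    push_cast [← Complex.mul_conj]
    simp only [ha00c, ha01c, ha10c, ha11c, hb00c, hb01c, hb10c, hb11c, hv0c, hv1c, hbBc]
    simp only [ha00, ha01, ha10, ha11, hb00, hb01, hb10, hb11, hv0, hv1, hbB]
    linear_combination (-(z 1)) * ez0 + (z 0) * ez1
  have e0' : ((tt : ℝ) : ℂ) * w 0 + bB * w 1 = (lam₁ : ℂ) * w 0 := by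
    rw [hbB, htt]
    push_cast [← Complex.mul_conj]
    linear_combination hw0
  have e1' : (starRingEnd ℂ) bB * w 0 + (1 - ((tt : ℝ) : ℂ)) * w 1 = (lam₁ : ℂ) * w 1 := by
    rw [hbBc, htt]
    push_cast [← Complex.mul_conj]
    linear_combination hw1 - w 1 * hTc
  have hdet := det_of_eig tt lam₁ bB (ne2 w hwne) e0' e1'
  have hquad := quad tt lam₁ bB hlam₁ hdet v0 v1
  have hGc : (((Complex.normSq (((starRingEnd ℂ) v0 * (c 0 0 0) + (starRingEnd ℂ) v1 * (c 1 0 0))) + Complex.normSq (((starRingEnd ℂ) v0 * (c 0 0 1) + (starRingEnd ℂ) v1 * (c 1 0 1))) + Complex.normSq (((starRingEnd ℂ) v0 * (c 0 1 0) + (starRingEnd ℂ) v1 * (c 1 1 0))) + Complex.normSq (((starRingEnd ℂ) v0 * (c 0 1 1) + (starRingEnd ℂ) v1 * (c 1 1 1)))) : ℝ) : ℂ) = ((starRingEnd ℂ) v0 * ((tt : ℂ) * v0 + bB * v1) + (starRingEnd ℂ) v1 * ((starRingEnd ℂ) bB * v0 + (1 - (tt : ℂ)) * v1)) := by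
    push_cast [← Complex.mul_conj]
    simp only [map_add, map_mul, map_neg, Complex.conj_conj]
    simp only [ha00c, ha01c, ha10c, ha11c, hb00c, hb01c, hb10c, hb11c, hv0c, hv1c, hbBc]
    simp only [ha00, ha01, ha10, ha11, hb00, hb01, hb10, hb11, hv0, hv1, hbB]
    rw [htt]
    push_cast [← Complex.mul_conj]
    linear_combination (((starRingEnd ℂ) (y 1) * (starRingEnd ℂ) (z 1) * (starRingEnd ℂ) (c 1 0 0) + -(starRingEnd ℂ) (y 1) * (starRingEnd ℂ) (z 0) * (starRingEnd ℂ) (c 1 0 1) + -(starRingEnd ℂ) (y 0) * (starRingEnd ℂ) (z 1) * (starRingEnd ℂ) (c 1 1 0) + (starRingEnd ℂ) (y 0) * (starRingEnd ℂ) (z 0) * (starRingEnd ℂ) (c 1 1 1)) * ((y 1) * (z 1) * (c 1 0 0) + -(y 1) * (z 0) * (c 1 0 1) + -(y 0) * (z 1) * (c 1 1 0) + (y 0) * (z 0) * (c 1 1 1))) * hTc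
  have hGre : (Complex.normSq (((starRingEnd ℂ) v0 * (c 0 0 0) + (starRingEnd ℂ) v1 * (c 1 0 0))) + Complex.normSq (((starRingEnd ℂ) v0 * (c 0 0 1) + (starRingEnd ℂ) v1 * (c 1 0 1))) + Complex.normSq (((starRingEnd ℂ) v0 * (c 0 1 0) + (starRingEnd ℂ) v1 * (c 1 1 0))) + Complex.normSq (((starRingEnd ℂ) v0 * (c 0 1 1) + (starRingEnd ℂ) v1 * (c 1 1 1)))) = (((starRingEnd ℂ) v0 * ((tt : ℂ) * v0 + bB * v1) + (starRingEnd ℂ) v1 * ((starRingEnd ℂ) bB * v0 + (1 - (tt : ℂ)) * v1))).re := by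
    rw [← hGc, Complex.ofReal_re]
  have hGbound : (Complex.normSq (((starRingEnd ℂ) v0 * (c 0 0 0) + (starRingEnd ℂ) v1 * (c 1 0 0))) + Complex.normSq (((starRingEnd ℂ) v0 * (c 0 0 1) + (starRingEnd ℂ) v1 * (c 1 0 1))) + Complex.normSq (((starRingEnd ℂ) v0 * (c 0 1 0) + (starRingEnd ℂ) v1 * (c 1 1 0))) + Complex.normSq (((starRingEnd ℂ) v0 * (c 0 1 1) + (starRingEnd ℂ) v1 * (c 1 1 1)))) ≤ (1 - lam₁) * (Complex.normSq v0 + Complex.normSq v1) := by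
    rw [hGre]; exact hquad
  have hcs4 := cs4' ((-(y 1)) * (-(z 1))) ((-(y 1)) * (z 0)) ((y 0) * (-(z 1))) ((y 0) * (z 0)) ((starRingEnd ℂ) v0 * (c 0 0 0) + (starRingEnd ℂ) v1 * (c 1 0 0)) ((starRingEnd ℂ) v0 * (c 0 0 1) + (starRingEnd ℂ) v1 * (c 1 0 1)) ((starRingEnd ℂ) v0 * (c 0 1 0) + (starRingEnd ℂ) v1 * (c 1 1 0)) ((starRingEnd ℂ) v0 * (c 0 1 1) + (starRingEnd ℂ) v1 * (c 1 1 1))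
  simp only [Complex.normSq_mul, Complex.normSq_neg] at hcs4
  have hVc : ((-(y 1)) * (-(z 1))) * ((starRingEnd ℂ) v0 * (c 0 0 0) + (starRingEnd ℂ) v1 * (c 1 0 0)) + ((-(y 1)) * (z 0)) * ((starRingEnd ℂ) v0 * (c 0 0 1) + (starRingEnd ℂ) v1 * (c 1 0 1)) + ((y 0) * (-(z 1))) * ((starRingEnd ℂ) v0 * (c 0 1 0) + (starRingEnd ℂ) v1 * (c 1 1 0)) + ((y 0) * (z 0)) * ((starRingEnd ℂ) v0 * (c 0 1 1) + (starRingEnd ℂ) v1 * (c 1 1 1)) = (((Complex.normSq v0 + Complex.normSq v1) : ℝ) : ℂ) := by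
    push_cast [← Complex.mul_conj]
    simp only [ha00c, ha01c, ha10c, ha11c, hb00c, hb01c, hb10c, hb11c, hv0c, hv1c, hbBc]
    simp only [ha00, ha01, ha10, ha11, hb00, hb01, hb10, hb11, hv0, hv1, hbB]
    ring
  have hVsq : Complex.normSq (((-(y 1)) * (-(z 1))) * ((starRingEnd ℂ) v0 * (c 0 0 0) + (starRingEnd ℂ) v1 * (c 1 0 0)) + ((-(y 1)) * (z 0)) * ((starRingEnd ℂ) v0 * (c 0 0 1) + (starRingEnd ℂ) v1 * (c 1 0 1)) + ((y 0) * (-(z 1))) * ((starRingEnd ℂ) v0 * (c 0 1 0) + (starRingEnd ℂ) v1 * (c 1 1 0)) + ((y 0) * (z 0)) * ((starRingEnd ℂ) v0 * (c 0 1 1) + (starRingEnd ℂ) v1 * (c 1 1 1))) = (Complex.normSq v0 + Complex.normSq v1) * (Complex.normSq v0 + Complex.normSq v1) := by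
    rw [hVc, Complex.normSq_ofReal]
  have hcs00 := cs2' (-(y 1)) (y 0) (((z 0) * (starRingEnd ℂ) (z 0) + (z 1) * (starRingEnd ℂ) (z 1)) * (c 0 0 0) - (-(starRingEnd ℂ) (z 1)) * b00) (((z 0) * (starRingEnd ℂ) (z 0) + (z 1) * (starRingEnd ℂ) (z 1)) * (c 0 1 0) - (-(starRingEnd ℂ) (z 1)) * b01)
  have hcs01 := cs2' (-(y 1)) (y 0) (((z 0) * (starRingEnd ℂ) (z 0) + (z 1) * (starRingEnd ℂ) (z 1)) * (c 0 0 1) - ((starRingEnd ℂ) (z 0)) * b00) (((z 0) * (starRingEnd ℂ) (z 0) + (z 1) * (starRingEnd ℂ) (z 1)) * (c 0 1 1) - ((starRingEnd ℂ) (z 0)) * b01)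
  have hcs10 := cs2' (-(y 1)) (y 0) (((z 0) * (starRingEnd ℂ) (z 0) + (z 1) * (starRingEnd ℂ) (z 1)) * (c 1 0 0) - (-(starRingEnd ℂ) (z 1)) * b10) (((z 0) * (starRingEnd ℂ) (z 0) + (z 1) * (starRingEnd ℂ) (z 1)) * (c 1 1 0) - (-(starRingEnd ℂ) (z 1)) * b11)
  have hcs11 := cs2' (-(y 1)) (y 0) (((z 0) * (starRingEnd ℂ) (z 0) + (z 1) * (starRingEnd ℂ) (z 1)) * (c 1 0 1) - ((starRingEnd ℂ) (z 0)) * b10) (((z 0) * (starRingEnd ℂ) (z 0) + (z 1) * (starRingEnd ℂ) (z 1)) * (c 1 1 1) - ((starRingEnd ℂ) (z 0)) * b11)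
  simp only [Complex.normSq_neg] at hcs00 hcs01 hcs10 hcs11
  have hsum : (Complex.normSq ((-(y 1)) * (((z 0) * (starRingEnd ℂ) (z 0) + (z 1) * (starRingEnd ℂ) (z 1)) * (c 0 0 0) - (-(starRingEnd ℂ) (z 1)) * b00) + (y 0) * (((z 0) * (starRingEnd ℂ) (z 0) + (z 1) * (starRingEnd ℂ) (z 1)) * (c 0 1 0) - (-(starRingEnd ℂ) (z 1)) * b01)) + Complex.normSq ((-(y 1)) * (((z 0) * (starRingEnd ℂ) (z 0) + (z 1) * (starRingEnd ℂ) (z 1)) * (c 0 0 1) - ((starRingEnd ℂ) (z 0)) * b00) + (y 0) * (((z 0) * (starRingEnd ℂ) (z 0) + (z 1) * (starRingEnd ℂ) (z 1)) * (c 0 1 1) - ((starRingEnd ℂ) (z 0)) * b01)) + Complex.normSq ((-(y 1)) * (((z 0) * (starRingEnd ℂ) (z 0) + (z 1) * (starRingEnd ℂ) (z 1)) * (c 1 0 0) - (-(starRingEnd ℂ) (z 1)) * b10) + (y 0) * (((z 0) * (starRingEnd ℂ) (z 0) + (z 1) * (starRingEnd ℂ) (z 1)) * (c 1 1 0) - (-(starRingEnd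 ℂ) (z 1)) * b11)) + Complex.normSq ((-(y 1)) * (((z 0) * (starRingEnd ℂ) (z 0) + (z 1) * (starRingEnd ℂ) (z 1)) * (c 1 0 1) - ((starRingEnd ℂ) (z 0)) * b10) + (y 0) * (((z 0) * (starRingEnd ℂ) (z 0) + (z 1) * (starRingEnd ℂ) (z 1)) * (c 1 1 1) - ((starRingEnd ℂ) (z 0)) * b11))) ≤ (Complex.normSq (y 0) + Complex.normSq (y 1)) * (Complex.normSq ((((z 0) * (starRingEnd ℂ) (z 0) + (z 1) * (starRingEnd ℂ) (z 1)) * (c 0 0 0) - (-(starRingEnd ℂ) (z 1)) * b00)) + Complex.normSq ((((z 0) * (starRingEnd ℂ) (z 0) + (z 1) * (starRingEnd ℂ) (z 1)) * (c 0 0 1) - ((starRingEnd ℂ) (z 0)) * b00)) + Complex.normSq ((((z 0) * (starRingEnd ℂ) (z 0) + (z 1) * (starRingEnd ℂ) (z 1)) * (c 0 1 0) - (-(starRingEnd ℂ) (z 1)) * b01)) + Complex.normSq ((((z 0) * (starRingEnd ℂ) (z 0) + (z 1) * (starRingEnd ℂ) (z 1)) * (c 0 1 1) - ((starRingEnd ℂ)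 (z 0)) * b01)) + Complex.normSq ((((z 0) * (starRingEnd ℂ) (z 0) + (z 1) * (starRingEnd ℂ) (z 1)) * (c 1 0 0) - (-(starRingEnd ℂ) (z 1)) * b10)) + Complex.normSq ((((z 0) * (starRingEnd ℂ) (z 0) + (z 1) * (starRingEnd ℂ) (z 1)) * (c 1 0 1) - ((starRingEnd ℂ) (z 0)) * b10)) + Complex.normSq ((((z 0) * (starRingEnd ℂ) (z 0) + (z 1) * (starRingEnd ℂ) (z 1)) * (c 1 1 0) - (-(starRingEnd ℂ) (z 1)) * b11)) + Complex.normSq ((((z 0) * (starRingEnd ℂ) (z 0) + (z 1) * (starRingEnd ℂ) (z 1)) * (c 1 1 1) - ((starRingEnd ℂ) (z 0)) * b11))) := by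
    nlinarith only [hcs00, hcs01, hcs10, hcs11]
  have idL : (Complex.normSq ((-(y 1)) * (((z 0) * (starRingEnd ℂ) (z 0) + (z 1) * (starRingEnd ℂ) (z 1)) * (c 0 0 0) - (-(starRingEnd ℂ) (z 1)) * b00) + (y 0) * (((z 0) * (starRingEnd ℂ) (z 0) + (z 1) * (starRingEnd ℂ) (z 1)) * (c 0 1 0) - (-(starRingEnd ℂ) (z 1)) * b01)) + Complex.normSq ((-(y 1)) * (((z 0) * (starRingEnd ℂ) (z 0) + (z 1) * (starRingEnd ℂ) (z 1)) * (c 0 0 1) - ((starRingEnd ℂ) (z 0)) * b00) + (y 0) * (((z 0) * (starRingEnd ℂ) (z 0) + (z 1) * (starRingEnd ℂ) (z 1)) * (c 0 1 1) - ((starRingEnd ℂ) (z 0)) * b01)) + Complex.normSq ((-(y 1)) * (((z 0) * (starRingEnd ℂ) (z 0) + (z 1) * (starRingEnd ℂ) (z 1)) * (c 1 0 0) - (-(starRingEnd ℂ) (z 1)) * b10) + (y 0) * (((z 0) * (starRingEnd ℂ) (z 0) + (z 1) * (starRingEnd ℂ) (z 1)) * (c 1 1 0) - (-(starRingEnd ℂ)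 (z 1)) * b11)) + Complex.normSq ((-(y 1)) * (((z 0) * (starRingEnd ℂ) (z 0) + (z 1) * (starRingEnd ℂ) (z 1)) * (c 1 0 1) - ((starRingEnd ℂ) (z 0)) * b10) + (y 0) * (((z 0) * (starRingEnd ℂ) (z 0) + (z 1) * (starRingEnd ℂ) (z 1)) * (c 1 1 1) - ((starRingEnd ℂ) (z 0)) * b11))) = (Complex.normSq (z 0) + Complex.normSq (z 1)) * (Complex.normSq (z 0) + Complex.normSq (z 1)) * (Complex.normSq a00 + Complex.normSq a01 + Complex.normSq a10 + Complex.normSq a11) - (Complex.normSq (z 0) + Complex.normSq (z 1)) * (Complex.normSq v0 + Complex.normSq v1) := by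
    rw [← Complex.ofReal_inj]
    push_cast [← Complex.mul_conj]
    simp only [map_add, map_sub, map_mul, map_neg, Complex.conj_conj]
    simp only [ha00c, ha01c, ha10c, ha11c, hb00c, hb01c, hb10c, hb11c, hv0c, hv1c, hbBc]
    simp only [ha00, ha01, ha10, ha11, hb00, hb01, hb10, hb11, hv0, hv1, hbB]
    ring
  have idR : (Complex.normSq ((((z 0) * (starRingEnd ℂ) (z 0) + (z 1) * (starRingEnd ℂ) (z 1)) * (c 0 0 0) - (-(starRingEnd ℂ) (z 1)) * b00)) + Complex.normSq ((((z 0) * (starRingEnd ℂ) (z 0) + (z 1) * (starRingEnd ℂ) (z 1)) * (c 0 0 1) - ((starRingEnd ℂ) (z 0)) * b00)) + Complex.normSq ((((z 0) * (starRingEnd ℂ) (z 0) + (z 1) * (starRingEnd ℂ) (z 1)) * (c 0 1 0) - (-(starRingEnd ℂ) (z 1)) * b01)) + Complex.normSq ((((z 0) * (starRingEnd ℂ) (z 0) + (z 1) * (starRingEnd ℂ) (z 1)) * (c 0 1 1) - ((starRingEnd ℂ) (z 0)) * b01)) + Complex.normSq ((((z 0) * (starRingEnd ℂ) (z 0) +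 (z 1) * (starRingEnd ℂ) (z 1)) * (c 1 0 0) - (-(starRingEnd ℂ) (z 1)) * b10)) + Complex.normSq ((((z 0) * (starRingEnd ℂ) (z 0) + (z 1) * (starRingEnd ℂ) (z 1)) * (c 1 0 1) - ((starRingEnd ℂ) (z 0)) * b10)) + Complex.normSq ((((z 0) * (starRingEnd ℂ) (z 0) + (z 1) * (starRingEnd ℂ) (z 1)) * (c 1 1 0) - (-(starRingEnd ℂ) (z 1)) * b11)) + Complex.normSq ((((z 0) * (starRingEnd ℂ) (z 0) + (z 1) * (starRingEnd ℂ) (z 1)) * (c 1 1 1) - ((starRingEnd ℂ) (z 0)) * b11))) = (Complex.normSq (z 0) + Complex.normSq (z 1)) * (Complex.normSq (z 0) + Complex.normSq (z 1)) * (Complex.normSq (c 0 0 0) + Complex.normSq (c 0 0 1) + Complex.normSq (c 0 1 0) + Complex.normSq (c 0 1 1) + Complex.normSq (c 1 0 0) + Complex.normSq (c 1 0 1) + Complex.normSq (c 1 1 0) + Complex.normSq (c 1 1 1)) - (Complex.normSq (z 0) + Complex.normSq (z 1)) * (Complex.normSq b00 + Complex.normSq b01 + Complex.normSq b10 + Complex.normSq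 b11) := by
    rw [← Complex.ofReal_inj]
    push_cast [← Complex.mul_conj]
    simp only [map_add, map_sub, map_mul, map_neg, Complex.conj_conj]
    simp only [ha00c, ha01c, ha10c, ha11c, hb00c, hb01c, hb10c, hb11c, hv0c, hv1c, hbBc]
    simp only [ha00, ha01, ha10, ha11, hb00, hb01, hb10, hb11, hv0, hv1, hbB]
    ring
  have hYpos : 0 < (Complex.normSq (y 0) + Complex.normSq (y 1)) := pos2 y hyne
  have hZpos : 0 < (Complex.normSq (z 0) + Complex.normSq (z 1)) := pos2 z hzne
  have hVnn : 0 ≤ (Complex.normSq v0 + Complex.normSq v1) := add_nonneg (Complex.normSq_nonneg v0) (Complex.normSq_nonneg v1)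
  have key1 : (Complex.normSq (z 0) + Complex.normSq (z 1)) * (Complex.normSq (z 0) + Complex.normSq (z 1)) * (Complex.normSq a00 + Complex.normSq a01 + Complex.normSq a10 + Complex.normSq a11) - (Complex.normSq (z 0) + Complex.normSq (z 1)) * (Complex.normSq v0 + Complex.normSq v1) ≤ (Complex.normSq (y 0) + Complex.normSq (y 1)) * ((Complex.normSq (z 0) + Complex.normSq (z 1)) * (Complex.normSq (z 0) + Complex.normSq (z 1)) * (Complex.normSq (c 0 0 0) + Complex.normSq (c 0 0 1) + Complex.normSq (c 0 1 0) + Complex.normSq (c 0 1 1) + Complex.normSq (c 1 0 0) + Complex.normSq (c 1 0 1) + Complex.normSq (c 1 1 0) + Complex.normSq (c 1 1 1)) - (Complex.normSq (z 0) + Complex.normSq (z 1)) * (Complex.normSq b00 + Complex.normSq b01 + Complex.normSq b10 + Complex.normSq b11)) := by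
    rw [← idL, ← idR]; exact hsum
  have key2 : (Complex.normSq (z 0) + Complex.normSq (z 1)) * ((Complex.normSq (y 0) + Complex.normSq (y 1)) * (Complex.normSq (z 0) + Complex.normSq (z 1)) * (1 - lam₂ - lam₃) - (Complex.normSq v0 + Complex.normSq v1)) ≤ 0 := by
    have e1 : (Complex.normSq (z 0) + Complex.normSq (z 1)) * (Complex.normSq (z 0) + Complex.normSq (z 1)) * (Complex.normSq a00 + Complex.normSq a01 + Complex.normSq a10 + Complex.normSq a11) = (Complex.normSq (z 0) + Complex.normSq (z 1)) * (Complex.normSq (z 0) + Complex.normSq (z 1)) * ((1 - lam₂) * (Complex.normSq (y 0) + Complex.normSq (y 1))) := by rw [hS2]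
    have e2 : (Complex.normSq (y 0) + Complex.normSq (y 1)) * ((Complex.normSq (z 0) + Complex.normSq (z 1)) * (Complex.normSq b00 + Complex.normSq b01 + Complex.normSq b10 + Complex.normSq b11)) = (Complex.normSq (y 0) + Complex.normSq (y 1)) * ((Complex.normSq (z 0) + Complex.normSq (z 1)) * ((1 - lam₃) * (Complex.normSq (z 0) + Complex.normSq (z 1)))) := by rw [hS3]
    have e3 : (Complex.normSq (y 0) + Complex.normSq (y 1)) * ((Complex.normSq (z 0) + Complex.normSq (z 1)) * (Complex.normSq (z 0) + Complex.normSq (z 1)) * (Complex.normSq (c 0 0 0) + Complex.normSq (c 0 0 1) + Complex.normSq (c 0 1 0) + Complex.normSq (c 0 1 1) + Complex.normSq (c 1 0 0) + Complex.normSq (c 1 0 1) + Complex.normSq (c 1 1 0) + Complex.normSq (c 1 1 1))) = (Complex.normSq (y 0) + Complex.normSq (y 1)) * ((Complex.normSq (z 0) + Complex.normSq (z 1)) * (Complex.normSq (z 0) + Complex.normSq (z 1)) * 1) := by rw [hN]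
    nlinarith only [key1, e1, e2, e3]
  have I1 : (Complex.normSq (y 0) + Complex.normSq (y 1)) * (Complex.normSq (z 0) + Complex.normSq (z 1)) * (1 - lam₂ - lam₃) ≤ (Complex.normSq v0 + Complex.normSq v1) := by
    nlinarith only [key2, hZpos]
  have I2 : (Complex.normSq v0 + Complex.normSq v1) * (Complex.normSq v0 + Complex.normSq v1) ≤ (Complex.normSq (y 0) + Complex.normSq (y 1)) * (Complex.normSq (z 0) + Complex.normSq (z 1)) * ((1 - lam₁) * (Complex.normSq v0 + Complex.normSq v1)) := by
    nlinarith only [hcs4, hVsq, hGbound, mul_pos hYpos hZpos,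
      Complex.normSq_nonneg ((starRingEnd ℂ) v0 * (c 0 0 0) + (starRingEnd ℂ) v1 * (c 1 0 0)), Complex.normSq_nonneg ((starRingEnd ℂ) v0 * (c 0 0 1) + (starRingEnd ℂ) v1 * (c 1 0 1)),
      Complex.normSq_nonneg ((starRingEnd ℂ) v0 * (c 0 1 0) + (starRingEnd ℂ) v1 * (c 1 1 0)), Complex.normSq_nonneg ((starRingEnd ℂ) v0 * (c 0 1 1) + (starRingEnd ℂ) v1 * (c 1 1 1))]
  rcases eq_or_lt_of_le hVnn with hV | hV
  · nlinarith only [I1, mul_pos hYpos hZpos, hlam₁, hV]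
  · have hVle : (Complex.normSq v0 + Complex.normSq v1) ≤ (Complex.normSq (y 0) + Complex.normSq (y 1)) * (Complex.normSq (z 0) + Complex.normSq (z 1)) * (1 - lam₁) := by
      nlinarith only [I2, hV]
    nlinarith only [I1, hVle, mul_pos hYpos hZpos]
end

section
/- Let H be a finite-dimensional complex inner product space, Ĥ self-adjoint with nondegenerate ground state ψ₀, ground energy E₀, first excited energy E⁻, and highest energy E⁺. Suppose P is an orthogonal projection with 1 - ‖Pψ₀‖² ≤ 2D₀ for some D₀ ≥ 0 (with 2D₀ < 1), and φ_HF is a unit vector with 1 - |⟨ψ₀, φ_HF⟩|² ≥ S₀/N for some S₀ > 0 and positive integer N. Let E_D be the minimum of ⟨φ, Ĥφ⟩ over unit vectors φ in the range of P, and E_corr = ⟨φ_HF, Ĥφ_HF⟩ - E₀. Then (E_D - E₀)/E_corr ≤ 2N (E⁺ - E₀)/(E⁻ - E₀) · D₀/S₀, provided E_corr > 0. -/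
open scoped InnerProductSpace

open Finset in
lemma quad_bounds {H : Type*} [NormedAddCommGroup H] [InnerProductSpace ℂ H]
    [FiniteDimensional ℂ H]
    (A : H →ₗ[ℂ] H) (hA : A.IsSymmetric)
    (E₀ Em Ep : ℝ) (ψ₀ : H) (hψ₀ : ‖ψ₀‖ = 1)
    (hnondeg : Module.End.eigenspace A (E₀ : ℂ) = Submodule.span ℂ {ψ₀})
    (hE₀min : ∀ c ∈ spectrum ℂ A, ∃ r : ℝ, c = (r : ℂ) ∧ E₀ ≤ r)
    (hEmmin : ∀ r : ℝ, (r : ℂ) ∈ spectrum ℂ A → E₀ < r → Em ≤ r)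
    (hEpmax : ∀ r : ℝ, (r : ℂ) ∈ spectrum ℂ A → r ≤ Ep)
    (φ : H) (hφ : ‖φ‖ = 1) :
    ⟪φ, A φ⟫_ℂ = (((⟪φ, A φ⟫_ℂ).re : ℝ) : ℂ) ∧
    E₀ + (Em - E₀) * (1 - ‖⟪ψ₀, φ⟫_ℂ‖ ^ 2) ≤ (⟪φ, A φ⟫_ℂ).re ∧
    (⟪φ, A φ⟫_ℂ).re ≤ E₀ + (Ep - E₀) * (1 - ‖⟪ψ₀, φ⟫_ℂ‖ ^ 2) := by
  classical
  have hn : Module.finrank ℂ H = Module.finrank ℂ H := rfl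
  set b := hA.eigenvectorBasis hn with hb
  set μ := hA.eigenvalues hn with hμ
  have hspec : ∀ i, ((μ i : ℝ) : ℂ) ∈ spectrum ℂ A := fun i =>
    Module.End.hasEigenvalue_iff_mem_spectrum.mp (hA.hasEigenvalue_eigenvalues hn i)
  have hE₀le : ∀ i, E₀ ≤ μ i := by
    intro i
    obtain ⟨r, hr, hr2⟩ := hE₀min _ (hspec i)
    have : μ i = r := by exact_mod_cast hr
    linarith
  have hEp : ∀ i, μ i ≤ Ep := fun i => hEpmax _ (hspec i)
  -- find the index of the ground state
  have hψ₀ne : ψ₀ ≠ 0 := by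
    intro h; rw [h, norm_zero] at hψ₀; norm_num at hψ₀
  obtain ⟨i₀, hi₀⟩ : ∃ i, ⟪b i, ψ₀⟫_ℂ ≠ 0 := by
    by_contra h
    push_neg at h
    have := b.sum_repr' ψ₀
    simp only [h, zero_smul, Finset.sum_const_zero] at this
    exact hψ₀ne this.symm
  have hground' : A ψ₀ = (E₀ : ℂ) • ψ₀ := by
    have : ψ₀ ∈ Module.End.eigenspace A (E₀ : ℂ) := by
      rw [hnondeg]; exact Submodule.mem_span_singleton_self ψ₀
    exact Module.End.mem_eigenspace_iff.mp this
  have hμi₀ : μ i₀ = E₀ := by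
    have h1 : ⟪b i₀, A ψ₀⟫_ℂ = (E₀ : ℂ) * ⟪b i₀, ψ₀⟫_ℂ := by
      rw [hground', inner_smul_right]
    have h2 : ⟪b i₀, A ψ₀⟫_ℂ = ((μ i₀ : ℝ) : ℂ) * ⟪b i₀, ψ₀⟫_ℂ := by
      rw [← hA (b i₀) ψ₀, hA.apply_eigenvectorBasis hn i₀, inner_smul_left]
      simp [Complex.conj_ofReal]
      rfl
    have h3 : (((μ i₀ : ℝ) : ℂ) - (E₀ : ℂ)) * ⟪b i₀, ψ₀⟫_ℂ = 0 := by
      rw [sub_mul, ← h1, ← h2, sub_self]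
    rcases mul_eq_zero.mp h3 with h | h
    · have : ((μ i₀ : ℝ) : ℂ) = (E₀ : ℂ) := by linear_combination h
      exact_mod_cast this
    · exact absurd h hi₀
  obtain ⟨a, ha⟩ : ∃ a : ℂ, b i₀ = a • ψ₀ := by
    have : b i₀ ∈ Module.End.eigenspace A (E₀ : ℂ) := by
      rw [← hμi₀]
      exact (hA.hasEigenvector_eigenvectorBasis hn i₀).1
    rw [hnondeg, Submodule.mem_span_singleton] at this
    obtain ⟨a, ha⟩ := this
    exact ⟨a, ha.symm⟩
  have hanorm : ‖a‖ = 1 := by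
    have : ‖b i₀‖ = 1 := b.orthonormal.1 i₀
    rw [ha, norm_smul, hψ₀, mul_one] at this
    exact this
  have hbinner : ∀ x : H, ‖⟪b i₀, x⟫_ℂ‖ = ‖⟪ψ₀, x⟫_ℂ‖ := by
    intro x
    rw [ha, inner_smul_left, norm_mul, RCLike.norm_conj, hanorm, one_mul]
  have hμj : ∀ j, j ≠ i₀ → Em ≤ μ j := by
    intro j hj
    refine hEmmin _ (hspec j) ?_
    rcases lt_or_eq_of_le (hE₀le j) with h | h
    · exact h
    · exfalso
      obtain ⟨a', ha'⟩ : ∃ a' : ℂ, b j = a' • ψ₀ := by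
        have : b j ∈ Module.End.eigenspace A (E₀ : ℂ) := by
          rw [h]
          exact (hA.hasEigenvector_eigenvectorBasis hn j).1
        rw [hnondeg, Submodule.mem_span_singleton] at this
        obtain ⟨a', ha'⟩ := this
        exact ⟨a', ha'.symm⟩
      have ha'ne : a' ≠ 0 := by
        intro h0
        have : ‖b j‖ = 1 := b.orthonormal.1 j
        rw [ha', h0, zero_smul, norm_zero] at this
        norm_num at this
      have hane : a ≠ 0 := by
        intro h0; rw [h0, norm_zero] at hanorm; norm_num at hanorm
      have horth : ⟪b i₀, b j⟫_ℂ = 0 := b.orthonormal.2 (Ne.symm hj)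
      rw [ha, ha', inner_smul_left, inner_smul_right] at horth
      rw [inner_self_eq_norm_sq_to_K, hψ₀] at horth
      have h0 : (starRingEnd ℂ) a * a' = 0 := by
        simpa using horth
      rcases mul_eq_zero.mp h0 with h' | h'
      · exact hane (by simpa using congrArg (starRingEnd ℂ) h')
      · exact ha'ne h'
  -- the quadratic form as a sum
  set c : Fin (Module.finrank ℂ H) → ℝ := fun i => ‖⟪b i, φ⟫_ℂ‖ ^ 2 with hc
  have hcnonneg : ∀ i, 0 ≤ c i := fun i => sq_nonneg _
  have hsum : ⟪φ, A φ⟫_ℂ = ((∑ i, μ i * c i : ℝ) : ℂ) := by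
    rw [← b.sum_inner_mul_inner φ (A φ), Complex.ofReal_sum]
    refine Finset.sum_congr rfl fun i _ => ?_
    have h1 : ⟪b i, A φ⟫_ℂ = ((μ i : ℝ) : ℂ) * ⟪b i, φ⟫_ℂ := by
      rw [← hA (b i) φ, hA.apply_eigenvectorBasis hn i, inner_smul_left]
      simp [Complex.conj_ofReal]
      rfl
    have hz : ((‖⟪b i, φ⟫_ℂ‖ ^ 2 : ℝ) : ℂ)
        = (starRingEnd ℂ) ⟪b i, φ⟫_ℂ * ⟪b i, φ⟫_ℂ := by
      rw [← Complex.normSq_eq_conj_mul_self]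
      norm_cast
      rw [← Complex.sq_norm]
    rw [h1]
    simp only [hc]
    rw [Complex.ofReal_mul, hz, ← inner_conj_symm φ (b i)]
    ring
  have hnormsum : ∑ i, c i = 1 := by
    have h := b.sum_inner_mul_inner φ φ
    rw [inner_self_eq_norm_sq_to_K, hφ] at h
    have h2 : ∀ i, ⟪φ, b i⟫_ℂ * ⟪b i, φ⟫_ℂ = ((c i : ℝ) : ℂ) := by
      intro i
      have hz : ((‖⟪b i, φ⟫_ℂ‖ ^ 2 : ℝ) : ℂ)
          = (starRingEnd ℂ) ⟪b i, φ⟫_ℂ * ⟪b i, φ⟫_ℂ := by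
        rw [← Complex.normSq_eq_conj_mul_self]
        norm_cast
        rw [← Complex.sq_norm]
      simp only [hc]
      rw [hz, ← inner_conj_symm φ (b i)]
    simp only [h2] at h
    have : ((∑ i, c i : ℝ) : ℂ) = ((1 : ℝ) : ℂ) := by push_cast at h ⊢; simpa using h
    exact_mod_cast this
  have hre : (⟪φ, A φ⟫_ℂ).re = ∑ i, μ i * c i := by rw [hsum, Complex.ofReal_re]
  have hci₀ : c i₀ = ‖⟪ψ₀, φ⟫_ℂ‖ ^ 2 := by simp only [hc]; rw [hbinner]
  have hci₀le : c i₀ ≤ 1 := by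
    have := Finset.single_le_sum (f := c) (fun i _ => hcnonneg i) (Finset.mem_univ i₀)
    linarith [hnormsum]
  have herase : ∑ i ∈ Finset.univ.erase i₀, c i = 1 - ‖⟪ψ₀, φ⟫_ℂ‖ ^ 2 := by
    have := Finset.add_sum_erase Finset.univ c (Finset.mem_univ i₀)
    rw [hnormsum] at this
    rw [← hci₀]; linarith
  have hsplit : ∑ i, μ i * c i =
      E₀ * c i₀ + ∑ i ∈ Finset.univ.erase i₀, μ i * c i := by
    rw [← hμi₀, Finset.add_sum_erase Finset.univ (fun i => μ i * c i) (Finset.mem_univ i₀)]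
  refine ⟨by rw [hsum, Complex.ofReal_re], ?_, ?_⟩
  · -- lower bound
    have hlow : ∀ i ∈ Finset.univ.erase i₀, Em * c i ≤ μ i * c i := by
      intro i hi
      exact mul_le_mul_of_nonneg_right (hμj i (Finset.mem_erase.mp hi).1) (hcnonneg i)
    have := Finset.sum_le_sum hlow
    rw [← Finset.mul_sum, herase] at this
    rw [hre, hsplit, hci₀]
    nlinarith [hci₀le, hci₀]
  · have hup : ∀ i ∈ Finset.univ.erase i₀, μ i * c i ≤ Ep * c i := by
      intro i _
      exact mul_le_mul_of_nonneg_right (hEp i) (hcnonneg i)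
    have := Finset.sum_le_sum hup
    rw [← Finset.mul_sum, herase] at this
    rw [hre, hsplit, hci₀]
    nlinarith [hci₀le, hci₀]

theorem stmt_18 {H : Type*} [NormedAddCommGroup H] [InnerProductSpace ℂ H]
    [FiniteDimensional ℂ H]
    (A : H →ₗ[ℂ] H) (hA : ∀ x y : H, ⟪A x, y⟫_ℂ = ⟪x, A y⟫_ℂ)
    (E₀ Em Ep : ℝ) (ψ₀ : H) (hψ₀ : ‖ψ₀‖ = 1)
    (hground : A ψ₀ = (E₀ : ℂ) • ψ₀)
    (hnondeg : Module.End.eigenspace A (E₀ : ℂ) = Submodule.span ℂ {ψ₀})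
    (hE₀min : ∀ c ∈ spectrum ℂ A, ∃ r : ℝ, c = (r : ℂ) ∧ E₀ ≤ r)
    (hEmmem : (Em : ℂ) ∈ spectrum ℂ A) (hE₀Em : E₀ < Em)
    (hEmmin : ∀ r : ℝ, (r : ℂ) ∈ spectrum ℂ A → E₀ < r → Em ≤ r)
    (hEpmem : (Ep : ℂ) ∈ spectrum ℂ A)
    (hEpmax : ∀ r : ℝ, (r : ℂ) ∈ spectrum ℂ A → r ≤ Ep)
    (P : H →ₗ[ℂ] H) (hPsym : ∀ x y : H, ⟪P x, y⟫_ℂ = ⟪x, P y⟫_ℂ)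
    (hPidem : P ∘ₗ P = P)
    (D₀ : ℝ) (hD₀ : 0 ≤ D₀) (hD₀1 : 2 * D₀ < 1)
    (hoverlapP : 1 - ‖P ψ₀‖ ^ 2 ≤ 2 * D₀)
    (φHF : H) (hφHF : ‖φHF‖ = 1)
    (S₀ : ℝ) (hS₀ : 0 < S₀) (N : ℕ) (hN : 0 < N)
    (hoverlapHF : S₀ / N ≤ 1 - ‖⟪ψ₀, φHF⟫_ℂ‖ ^ 2)
    (ED : ℝ)
    (hED : ED = sInf {e : ℝ | ∃ φ : H, ‖φ‖ = 1 ∧ P φ = φ ∧ (e : ℂ) = ⟪φ, A φ⟫_ℂ})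
    (eHF : ℝ) (heHF : (eHF : ℂ) = ⟪φHF, A φHF⟫_ℂ)
    (Ecorr : ℝ) (hEcorr : Ecorr = eHF - E₀) (hEcorrpos : 0 < Ecorr) :
    (ED - E₀) / Ecorr ≤ 2 * N * (Ep - E₀) / (Em - E₀) * (D₀ / S₀) := by
  have hA' : A.IsSymmetric := fun x y => hA x y
  have key := fun (φ : H) (hφ : ‖φ‖ = 1) =>
    quad_bounds A hA' E₀ Em Ep ψ₀ hψ₀ hnondeg hE₀min hEmmin hEpmax φ hφ
  have hEmEp : Em ≤ Ep := hEpmax Em hEmmem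
  have hE₀Ep : E₀ ≤ Ep := le_trans (le_of_lt hE₀Em) hEmEp
  -- the norm of P ψ₀ is positive
  have hPψpos : 0 < ‖P ψ₀‖ := by
    by_contra h
    push_neg at h
    have h0 : ‖P ψ₀‖ = 0 := le_antisymm h (norm_nonneg _)
    rw [h0] at hoverlapP
    norm_num at hoverlapP
    linarith
  -- the candidate vector
  set φc : H := ((‖P ψ₀‖ : ℂ))⁻¹ • P ψ₀ with hφc
  have hφcnorm : ‖φc‖ = 1 := by
    rw [hφc, norm_smul, norm_inv, Complex.norm_real, Real.norm_eq_abs,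
      abs_of_pos hPψpos]
    exact inv_mul_cancel₀ (ne_of_gt hPψpos)
  have hPPψ : P (P ψ₀) = P ψ₀ := by
    have := LinearMap.ext_iff.mp hPidem ψ₀
    simpa using this
  have hPφc : P φc = φc := by
    rw [hφc, map_smul, hPPψ]
  have hinnerφc : ⟪ψ₀, φc⟫_ℂ = ((‖P ψ₀‖ : ℝ) : ℂ) := by
    have h1 : ⟪ψ₀, P ψ₀⟫_ℂ = ⟪P ψ₀, P ψ₀⟫_ℂ := by
      have h2 := hPsym (P ψ₀) ψ₀
      have h3 := hPsym ψ₀ ψ₀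
      rw [hPPψ] at h2
      rw [← h3]
      exact h2
    have hne : ((‖P ψ₀‖ : ℝ) : ℂ) ≠ 0 := by exact_mod_cast ne_of_gt hPψpos
    rw [hφc, inner_smul_right, h1, inner_self_eq_norm_sq_to_K]
    field_simp
    rfl
  have hnormφc : ‖⟪ψ₀, φc⟫_ℂ‖ = ‖P ψ₀‖ := by
    rw [hinnerφc, Complex.norm_real, Real.norm_eq_abs, abs_of_pos hPψpos]
  -- bounded below
  obtain ⟨hrealc, hlowc, hupc⟩ := key φc hφcnorm
  set S : Set ℝ := {e : ℝ | ∃ φ : H, ‖φ‖ = 1 ∧ P φ = φ ∧ (e : ℂ) = ⟪φ, A φ⟫_ℂ} with hS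
  have hbdd : ∀ e ∈ S, E₀ ≤ e := by
    rintro e ⟨φ, hφ1, _, hφ3⟩
    obtain ⟨hreal, hlow, _⟩ := key φ hφ1
    have he : e = (⟪φ, A φ⟫_ℂ).re := by
      have := congrArg Complex.re hφ3; simpa using this
    have ht : ‖⟪ψ₀, φ⟫_ℂ‖ ≤ 1 := by
      calc ‖⟪ψ₀, φ⟫_ℂ‖ ≤ ‖ψ₀‖ * ‖φ‖ := norm_inner_le_norm _ _
        _ = 1 := by rw [hψ₀, hφ1, mul_one]
    have ht2 : ‖⟪ψ₀, φ⟫_ℂ‖ ^ 2 ≤ 1 := by nlinarith [norm_nonneg ⟪ψ₀, φ⟫_ℂ]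
    rw [he]
    nlinarith [hlow]
  have hmem : (⟪φc, A φc⟫_ℂ).re ∈ S := ⟨φc, hφcnorm, hPφc, hrealc.symm ▸ rfl⟩
  have hEDle : ED ≤ (⟪φc, A φc⟫_ℂ).re := by
    rw [hED]
    exact csInf_le ⟨E₀, fun e he => hbdd e he⟩ hmem
  -- numerator bound
  have hnum : ED - E₀ ≤ (Ep - E₀) * (2 * D₀) := by
    have h1 : 1 - ‖⟪ψ₀, φc⟫_ℂ‖ ^ 2 ≤ 2 * D₀ := by rw [hnormφc]; exact hoverlapP
    have h2 : (⟪φc, A φc⟫_ℂ).re ≤ E₀ + (Ep - E₀) * (2 * D₀) := by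
      refine le_trans hupc ?_
      have := mul_le_mul_of_nonneg_left h1 (by linarith : (0:ℝ) ≤ Ep - E₀)
      linarith
    linarith
  -- denominator bound
  obtain ⟨hrealHF, hlowHF, _⟩ := key φHF hφHF
  have heHFre : eHF = (⟪φHF, A φHF⟫_ℂ).re := by
    have := congrArg Complex.re heHF; simpa using this
  have habs : ‖⟪ψ₀, φHF⟫_ℂ‖ = ‖⟪ψ₀, φHF⟫_ℂ‖ := rfl
  have hden : (Em - E₀) * (S₀ / N) ≤ Ecorr := by
    rw [hEcorr, heHFre]
    have h1 : S₀ / N ≤ 1 - ‖⟪ψ₀, φHF⟫_ℂ‖ ^ 2 := by rw [habs]; exact hoverlapHF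
    have := mul_le_mul_of_nonneg_left h1 (by linarith : (0:ℝ) ≤ Em - E₀)
    linarith
  have hdenpos : 0 < (Em - E₀) * (S₀ / N) := by
    apply mul_pos (by linarith)
    exact div_pos hS₀ (by exact_mod_cast hN)
  have hBnonneg : 0 ≤ (Ep - E₀) * (2 * D₀) := by
    apply mul_nonneg (by linarith) (by linarith)
  have hfinal : (ED - E₀) / Ecorr ≤ ((Ep - E₀) * (2 * D₀)) / ((Em - E₀) * (S₀ / N)) :=
    div_le_div₀ hBnonneg hnum hdenpos hden
  refine le_trans hfinal (le_of_eq ?_)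
  have hNne : (N : ℝ) ≠ 0 := Nat.cast_ne_zero.mpr hN.ne'
  have hEmne : Em - E₀ ≠ 0 := by linarith
  field_simp
end
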